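/- arXiv:1012.5106 — 8 statements merged into one kernel-verified Lean document; each statement's English description precedes it below -/
import Mathlib

section
/- Let A ∈ ℂ^{N×N} be Hermitian positive semidefinite, let n be a natural number, and let τ ≥ 0 satisfy τ · ‖A‖₂ ≤ 1. Then the matrix g_τ = Σ_{k=0}^{n} (1/k!) (−τ A)^k satisfies ‖g_τ‖₂ ≤ 1. -/
open scoped Matrix ComplexOrder Matrix.Norms.L2Operator

/-- Strengthened bounds on partial sums of the alternating exponential series at `-y`
for `y ∈ [0, 1]`. -/
lemma truncExp_strong (y : ℝ) (hy0 : 0 ≤ y) (hy1 : y ≤ 1) (n : ℕ) :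
    (Even n → y ^ (n+1) / (n+1).factorial ≤ ∑ k ∈ Finset.range (n+1), (-y) ^ k / k.factorial
        ∧ ∑ k ∈ Finset.range (n+1), (-y) ^ k / k.factorial ≤ 1) ∧
    (Odd n → 0 ≤ ∑ k ∈ Finset.range (n+1), (-y) ^ k / k.factorial
        ∧ ∑ k ∈ Finset.range (n+1), (-y) ^ k / k.factorial ≤ 1 - y ^ (n+1) / (n+1).factorial) := by
  have hfac : ∀ m : ℕ, y ^ (m+1) / ((m+1).factorial : ℝ) ≤ y ^ m / (m.factorial : ℝ) := by
    intro m
    apply div_le_div₀ (pow_nonneg hy0 m)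
      (pow_le_pow_of_le_one hy0 hy1 (Nat.le_succ m))
      (by exact_mod_cast m.factorial_pos)
      (by exact_mod_cast Nat.factorial_le (Nat.le_succ m))
  have hfnn : ∀ m : ℕ, 0 ≤ y ^ m / (m.factorial : ℝ) := fun m =>
    div_nonneg (pow_nonneg hy0 m) (by positivity)
  induction n with
  | zero =>
    refine ⟨fun _ => ⟨?_, ?_⟩, fun h => absurd h (by simp)⟩
    · simpa [Nat.factorial] using hy1
    · simp
  | succ m ih =>
    rw [Finset.sum_range_succ]
    rcases Nat.even_or_odd m with he | ho
    · obtain ⟨h1, h2⟩ := ih.1 he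
      have hpow : (-y) ^ (m+1) = -(y ^ (m+1)) := (he.add_one).neg_pow y
      refine ⟨fun hc => absurd he (Nat.even_add_one.mp hc), fun _ => ⟨?_, ?_⟩⟩
      · rw [hpow, neg_div]; linarith
      · rw [hpow, neg_div]; have := hfac (m+1); linarith
    · obtain ⟨h1, h2⟩ := ih.2 ho
      have hpow : (-y) ^ (m+1) = y ^ (m+1) := (ho.add_one).neg_pow y
      refine ⟨fun _ => ⟨?_, ?_⟩, fun hc => absurd ho (Nat.odd_add_one.mp hc)⟩
      · rw [hpow]; have := hfac (m+1); linarith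
      · rw [hpow]; linarith

/-- Partial sums of the exponential series at `-y` are bounded by `1` in absolute
value for `y ∈ [0, 1]`. -/
lemma truncExp_abs_le (y : ℝ) (hy0 : 0 ≤ y) (hy1 : y ≤ 1) (n : ℕ) :
    |∑ k ∈ Finset.range (n+1), (-y) ^ k / k.factorial| ≤ 1 := by
  have h := truncExp_strong y hy0 hy1 n
  have hfnn : 0 ≤ y ^ (n+1) / ((n+1).factorial : ℝ) :=
    div_nonneg (pow_nonneg hy0 _) (by positivity)
  rw [abs_le]
  rcases Nat.even_or_odd n with he | ho
  · obtain ⟨h1, h2⟩ := h.1 he; constructor <;> linarith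
  · obtain ⟨h1, h2⟩ := h.2 ho; constructor <;> linarith

/-- Square complex matrices with the `ℓ²`-operator norm form a C⋆-algebra. -/
noncomputable instance matL2CStar {N : ℕ} : CStarAlgebra (Matrix (Fin N) (Fin N) ℂ) where

/-- If `A` is Hermitian positive semidefinite and `0 ≤ τ` with `τ · ‖A‖₂ ≤ 1`, then the
truncated exponential `g_τ = ∑_{k=0}^{n} (1/k!) (−τ A)^k` satisfies `‖g_τ‖₂ ≤ 1`
(ℓ²-operator norm). -/
theorem truncated_exp_matrix_norm_le_one {N : ℕ} (A : Matrix (Fin N) (Fin N) ℂ)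
    (hA : A.PosSemidef) (n : ℕ) (τ : ℝ) (hτ : 0 ≤ τ) (hτA : τ * ‖A‖ ≤ 1) :
    ‖∑ k ∈ Finset.range (n + 1), ((Nat.factorial k : ℂ))⁻¹ • ((-(τ : ℂ)) • A) ^ k‖ ≤ 1 := by
  have hsa : IsSelfAdjoint A := hA.isHermitian
  have hcont : ∀ k ∈ Finset.range (n+1),
      ContinuousOn (fun x : ℝ => ((-τ) ^ k / k.factorial) * x ^ k) (spectrum ℝ A) :=
    fun k _ => (continuous_const.mul (continuous_pow k)).continuousOn
  have hEq : ∑ k ∈ Finset.range (n + 1), ((Nat.factorial k : ℂ))⁻¹ • ((-(τ : ℂ)) • A) ^ k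
      = cfc (∑ k ∈ Finset.range (n + 1),
          (fun x : ℝ => ((-τ) ^ k / k.factorial) * x ^ k)) A := by
    rw [cfc_sum _ A _ hcont]
    refine Finset.sum_congr rfl fun k _ => ?_
    rw [cfc_const_mul _ _ A ((continuous_pow k).continuousOn), cfc_pow_id A k hsa]
    rw [smul_pow, smul_smul]
    have h1 : ((Nat.factorial k : ℂ))⁻¹ * (-(τ : ℂ)) ^ k
        = ((((-τ) ^ k / k.factorial : ℝ) : ℂ)) := by
      push_cast; ring
    rw [h1, Complex.coe_smul]
  rw [hEq]
  apply norm_cfc_le zero_le_one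
  intro x hx
  have hx0 : 0 ≤ x := by
    rw [Matrix.IsHermitian.spectrum_real_eq_range_eigenvalues hA.isHermitian] at hx
    obtain ⟨i, rfl⟩ := hx
    exact hA.eigenvalues_nonneg i
  have hx1 : τ * x ≤ 1 := by
    rcases Nat.eq_zero_or_pos N with rfl | hN
    · simp at hx
    · have : Nonempty (Fin N) := ⟨⟨0, hN⟩⟩
      have hxA : ‖x‖ ≤ ‖A‖ := spectrum.norm_le_norm_of_mem hx
      rw [Real.norm_eq_abs, abs_of_nonneg hx0] at hxA
      calc τ * x ≤ τ * ‖A‖ := by nlinarith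
        _ ≤ 1 := hτA
  simp only [Finset.sum_apply, Real.norm_eq_abs]
  have := truncExp_abs_le (τ * x) (mul_nonneg hτ hx0) hx1 n
  calc |∑ k ∈ Finset.range (n + 1), ((-τ) ^ k / k.factorial) * x ^ k|
      = |∑ k ∈ Finset.range (n + 1), (-(τ * x)) ^ k / k.factorial| := by
        congr 1
        refine Finset.sum_congr rfl fun k _ => ?_
        rw [neg_eq_neg_one_mul (τ * x), mul_pow, neg_eq_neg_one_mul τ, mul_pow, mul_pow]
        ring
    _ ≤ 1 := this
end

section
/- Let A ∈ ℂ^{N×N} be Hermitian positive semidefinite, let n be a natural number, and let τ ≥ 0 satisfy τ · ‖A‖₂ ≤ 1. Then for every natural number j, the j-th power of the matrix g_τ = Σ_{k=0}^{n} (1/k!) (−τ A)^k satisfies ‖g_τ^j‖₂ ≤ 1. -/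
open scoped Matrix ComplexOrder Matrix.Norms.L2Operator

/-- Partial sums of an alternating series with antitone nonnegative terms, whose first term is
at most `1`, lie in `[0, 1]`. -/
lemma alt_sum_bounds (f : ℕ → ℝ) (hf0 : ∀ i, 0 ≤ f i) (hfa : ∀ i, f (i + 1) ≤ f i)
    (hf1 : f 0 ≤ 1) (m : ℕ) :
    0 ≤ ∑ i ∈ Finset.range m, (-1 : ℝ) ^ i * f i ∧
      ∑ i ∈ Finset.range m, (-1 : ℝ) ^ i * f i ≤ 1 := by
  have e1 : ∀ k : ℕ, (-1 : ℝ) ^ (2 * k) = 1 := fun k => by simp [pow_mul]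
  have e2 : ∀ k : ℕ, (-1 : ℝ) ^ (2 * k + 1) = -1 := fun k => by
    rw [pow_succ, e1 k]; ring
  have key : ∀ k : ℕ, 0 ≤ ∑ i ∈ Finset.range (2 * k), (-1 : ℝ) ^ i * f i ∧
      ∑ i ∈ Finset.range (2 * k + 1), (-1 : ℝ) ^ i * f i ≤ 1 := by
    intro k
    induction k with
    | zero => simpa using hf1
    | succ k ih =>
      constructor
      · rw [show 2 * (k + 1) = (2 * k + 1) + 1 by ring, Finset.sum_range_succ,
          Finset.sum_range_succ, e1, e2]
        have := hfa (2 * k)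
        nlinarith [ih.1]
      · rw [show 2 * (k + 1) + 1 = (2 * k + 1 + 1) + 1 by ring, Finset.sum_range_succ,
          Finset.sum_range_succ, e2, show (-1 : ℝ) ^ (2 * k + 1 + 1) = 1 by
            rw [show 2 * k + 1 + 1 = 2 * (k + 1) by ring, e1]]
        have := hfa (2 * k + 1)
        nlinarith [ih.2]
  obtain ⟨k, rfl | rfl⟩ := Nat.even_or_odd' m
  · refine ⟨(key k).1, ?_⟩
    refine le_trans ?_ (key k).2
    rw [Finset.sum_range_succ, e1]
    nlinarith [hf0 (2 * k)]
  · refine ⟨?_, (key k).2⟩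
    rw [Finset.sum_range_succ, e1]
    nlinarith [hf0 (2 * k), (key k).1]

/-- For `t ∈ [0, 1]`, every partial sum of the series for `exp (-t)` has absolute value
at most `1`. -/
lemma alt_exp_partial_sum_bounds (t : ℝ) (ht0 : 0 ≤ t) (ht1 : t ≤ 1) (m : ℕ) :
    |∑ i ∈ Finset.range m, (-t) ^ i / (Nat.factorial i : ℝ)| ≤ 1 := by
  have hb := alt_sum_bounds (fun i => t ^ i / (Nat.factorial i : ℝ))
    (fun i => by positivity)
    (fun i => by
      apply div_le_div₀ (by positivity) (pow_le_pow_of_le_one ht0 ht1 (Nat.le_succ i))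
        (by positivity)
      exact_mod_cast Nat.factorial_le (Nat.le_succ i))
    (by simp) m
  have he : ∑ i ∈ Finset.range m, (-t) ^ i / (Nat.factorial i : ℝ)
      = ∑ i ∈ Finset.range m, (-1 : ℝ) ^ i * (t ^ i / (Nat.factorial i : ℝ)) := by
    refine Finset.sum_congr rfl fun i _ => ?_
    rw [neg_pow]; ring
  rw [he, abs_le]
  exact ⟨by linarith [hb.1], hb.2⟩

/-- Square complex matrices with the `ℓ²`-operator norm form a C⋆-algebra. -/
noncomputable instance matL2OpCStarAlgebra (N : ℕ) :
    CStarAlgebra (Matrix (Fin N) (Fin N) ℂ) :=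
  { Matrix.instL2OpNormedRing, Matrix.instL2OpNormedAlgebra,
    Matrix.instCStarRing, (FiniteDimensional.complete ℂ (Matrix (Fin N) (Fin N) ℂ)),
    (inferInstance : StarRing _), (inferInstance : StarModule ℂ _) with }

/-- If `A` is Hermitian positive semidefinite and `0 ≤ τ` with `τ · ‖A‖₂ ≤ 1`, then every
power of the truncated exponential `g_τ = ∑_{k=0}^{n} (1/k!) (−τ A)^k` satisfies
`‖g_τ^j‖₂ ≤ 1` (ℓ²-operator norm). -/
theorem truncated_exp_matrix_pow_norm_le_one {N : ℕ} (A : Matrix (Fin N) (Fin N) ℂ)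
    (hA : A.PosSemidef) (n : ℕ) (τ : ℝ) (hτ : 0 ≤ τ) (hτA : τ * ‖A‖ ≤ 1) :
    ∀ j : ℕ,
      ‖(∑ k ∈ Finset.range (n + 1), ((Nat.factorial k : ℂ))⁻¹ • ((-(τ : ℂ)) • A) ^ k) ^ j‖
        ≤ 1 := by
  intro j
  rcases subsingleton_or_nontrivial (Matrix (Fin N) (Fin N) ℂ) with hS | hN
  · rw [Subsingleton.elim
      ((∑ k ∈ Finset.range (n + 1), ((Nat.factorial k : ℂ))⁻¹ • ((-(τ : ℂ)) • A) ^ k) ^ j)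
      (0 : Matrix (Fin N) (Fin N) ℂ), norm_zero]
    exact zero_le_one
  have hsa : IsSelfAdjoint A := hA.1
  -- identify the truncated exponential with a continuous functional calculus element
  have hcfc : (∑ k ∈ Finset.range (n + 1), ((Nat.factorial k : ℂ))⁻¹ • ((-(τ : ℂ)) • A) ^ k)
      = cfc (fun x : ℝ => ∑ k ∈ Finset.range (n + 1),
          ((-τ) ^ k / (Nat.factorial k : ℝ)) * x ^ k) A := by
    rw [show (fun x : ℝ => ∑ k ∈ Finset.range (n + 1),
          ((-τ) ^ k / (Nat.factorial k : ℝ)) * x ^ k)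
        = ∑ k ∈ Finset.range (n + 1),
            (fun x : ℝ => ((-τ) ^ k / (Nat.factorial k : ℝ)) * x ^ k) by
      ext x; simp]
    rw [cfc_sum _ A _ (fun i _ => by fun_prop)]
    refine Finset.sum_congr rfl fun k _ => ?_
    rw [cfc_const_mul _ _ A (by fun_prop), cfc_pow_id A k hsa, smul_pow, smul_smul]
    rw [show ((-τ : ℝ) ^ k / (Nat.factorial k : ℝ)) • (A ^ k)
        = (((((-τ : ℝ) ^ k / (Nat.factorial k : ℝ)) : ℝ) : ℂ)) • (A ^ k) by
      rw [Complex.coe_smul]]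
    congr 1
    push_cast
    ring
  -- bound the norm of the truncated exponential by 1
  have hnorm : ‖∑ k ∈ Finset.range (n + 1), ((Nat.factorial k : ℂ))⁻¹ • ((-(τ : ℂ)) • A) ^ k‖
      ≤ 1 := by
    rw [hcfc]
    refine norm_cfc_le zero_le_one fun x hx => ?_
    have hx0 : 0 ≤ x := by
      have hx' := hx
      rw [Matrix.IsHermitian.spectrum_real_eq_range_eigenvalues hA.1] at hx'
      obtain ⟨i, rfl⟩ := hx'
      exact hA.eigenvalues_nonneg i
    have hxA : x ≤ ‖A‖ := (le_abs_self x).trans (spectrum.norm_le_norm_of_mem hx)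
    have ht0 : 0 ≤ τ * x := mul_nonneg hτ hx0
    have ht1 : τ * x ≤ 1 := (mul_le_mul_of_nonneg_left hxA hτ).trans hτA
    have := alt_exp_partial_sum_bounds (τ * x) ht0 ht1 (n + 1)
    rw [Real.norm_eq_abs]
    refine le_trans (le_of_eq ?_) this
    congr 1
    refine Finset.sum_congr rfl fun k _ => ?_
    rw [show -(τ * x) = -τ * x by ring, mul_pow]
    ring
  -- conclude for powers
  cases j with
  | zero => simp
  | succ j =>
    calc ‖(∑ k ∈ Finset.range (n + 1), ((Nat.factorial k : ℂ))⁻¹ • ((-(τ : ℂ)) • A) ^ k) ^ (j + 1)‖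
        ≤ ‖∑ k ∈ Finset.range (n + 1), ((Nat.factorial k : ℂ))⁻¹ • ((-(τ : ℂ)) • A) ^ k‖ ^ (j + 1) :=
          norm_pow_le' _ j.succ_pos
      _ ≤ 1 := pow_le_one₀ (norm_nonneg _) hnorm
end

section
/- Let A ∈ ℂ^{N×N} be Hermitian with all eigenvalues contained in the interval [κ, μ] where 0 < κ ≤ μ, let n ≥ 1 be a natural number, and let τ > 0 satisfy τ · μ ≤ 1. Then the matrix g_τ = Σ_{k=0}^{n} (1/k!) (−τ A)^k satisfies ‖g_τ‖₂ ≤ Σ_{k=0}^{n} (1/k!) (−τ κ)^k < 1. -/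
open scoped Matrix Matrix.Norms.L2Operator

noncomputable def truncExp (n : ℕ) (t : ℝ) : ℝ :=
  ∑ k ∈ Finset.range (n + 1), (-t) ^ k / (Nat.factorial k : ℝ)

lemma trunc_tail_sign (t : ℝ) (ht0 : 0 ≤ t) (ht1 : t ≤ 1) :
    ∀ m a : ℕ, 0 ≤ (-1 : ℝ) ^ a * ∑ k ∈ Finset.Ico a (a + m), (-t) ^ k / (Nat.factorial k : ℝ) := by
  intro m
  induction m using Nat.strong_induction_on with
  | _ m ih =>
  match m with
  | 0 => intro a; simp
  | 1 =>
    intro a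
    have h : Finset.Ico a (a + 1) = {a} := by
      rw [Nat.Ico_succ_singleton]
    rw [h, Finset.sum_singleton, neg_pow t a, ← mul_div_assoc, ← mul_assoc, ← mul_pow]
    simp only [neg_mul_neg, one_mul, one_pow]
    positivity
  | (m + 2) =>
    intro a
    have h1 : a < a + (m + 2) := by omega
    rw [Finset.sum_eq_sum_Ico_succ_bot h1]
    have h2 : a + 1 < a + (m + 2) := by omega
    rw [Finset.sum_eq_sum_Ico_succ_bot h2]
    have h3 : a + 1 + 1 = a + 2 := by omega
    have h4 : a + (m + 2) = (a + 2) + m := by omega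
    rw [h3, h4]
    have ihS := ih m (by omega) (a + 2)
    have hS : 0 ≤ (-1 : ℝ) ^ a * ∑ k ∈ Finset.Ico (a + 2) (a + 2 + m), (-t) ^ k / (Nat.factorial k : ℝ) := by
      have : (-1 : ℝ) ^ (a + 2) = (-1 : ℝ) ^ a := by
        rw [pow_add]; norm_num
      rwa [this] at ihS
    have hfa : (0 : ℝ) < (Nat.factorial a : ℝ) := by
      exact_mod_cast Nat.factorial_pos a
    have hfb : (0 : ℝ) < (Nat.factorial (a + 1) : ℝ) := by
      exact_mod_cast Nat.factorial_pos (a + 1)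
    have hpair : t ^ (a + 1) / (Nat.factorial (a + 1) : ℝ) ≤ t ^ a / (Nat.factorial a : ℝ) := by
      apply div_le_div₀ (pow_nonneg ht0 a) (pow_le_pow_of_le_one ht0 ht1 (Nat.le_succ a)) hfa
      exact_mod_cast Nat.factorial_le (Nat.le_succ a)
    have e1 : (-t) ^ a = (-1 : ℝ) ^ a * t ^ a := by rw [neg_pow]
    have e2 : (-t) ^ (a + 1) = -((-1 : ℝ) ^ a * t ^ (a + 1)) := by
      rw [neg_pow, pow_succ]; ring
    have hP : (-1 : ℝ) ^ a * (-1 : ℝ) ^ a = 1 := by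
      rw [← mul_pow]; norm_num
    rw [e1, e2]
    set P := (-1 : ℝ) ^ a with hPdef
    set S := ∑ k ∈ Finset.Ico (a + 2) (a + 2 + m), (-t) ^ k / (Nat.factorial k : ℝ)
    have expand : P * (P * t ^ a / (Nat.factorial a : ℝ) +
        (-(P * t ^ (a + 1)) / (Nat.factorial (a + 1) : ℝ) + S)) =
        t ^ a / (Nat.factorial a : ℝ) - t ^ (a + 1) / (Nat.factorial (a + 1) : ℝ) + P * S := by
      calc P * (P * t ^ a / (Nat.factorial a : ℝ) +
          (-(P * t ^ (a + 1)) / (Nat.factorial (a + 1) : ℝ) + S))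
          = (P * P) * (t ^ a / (Nat.factorial a : ℝ))
            - (P * P) * (t ^ (a + 1) / (Nat.factorial (a + 1) : ℝ)) + P * S := by ring
        _ = _ := by rw [hP]; ring
    rw [expand]
    linarith

lemma truncExp_nonneg (n : ℕ) {t : ℝ} (ht0 : 0 ≤ t) (ht1 : t ≤ 1) : 0 ≤ truncExp n t := by
  have h := trunc_tail_sign t ht0 ht1 (n + 1) 0
  rw [zero_add, pow_zero, one_mul, ← Finset.range_eq_Ico] at h
  exact h

lemma truncExp_le (n : ℕ) (hn : 1 ≤ n) {t : ℝ} (ht0 : 0 ≤ t) (ht1 : t ≤ 1) :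
    truncExp n t ≤ 1 - t + t ^ 2 / 2 := by
  match n, hn with
  | 1, _ =>
    have : truncExp 1 t = 1 - t := by
      simp [truncExp, Finset.sum_range_succ]
      ring
    rw [this]; nlinarith [sq_nonneg t]
  | (m + 2), _ =>
    have hsplit : truncExp (m + 2) t = (∑ k ∈ Finset.range 3, (-t) ^ k / (Nat.factorial k : ℝ))
        + ∑ k ∈ Finset.Ico 3 (m + 3), (-t) ^ k / (Nat.factorial k : ℝ) := by
      rw [truncExp, Finset.range_eq_Ico,
        show m + 2 + 1 = m + 3 from by omega]
      exact (Finset.sum_Ico_consecutive _ (by omega : (0:ℕ) ≤ 3) (by omega : 3 ≤ m + 3)).symm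
    have htail : (∑ k ∈ Finset.Ico 3 (m + 3), (-t) ^ k / (Nat.factorial k : ℝ)) ≤ 0 := by
      have := trunc_tail_sign t ht0 ht1 m 3
      have h3 : (3 : ℕ) + m = m + 3 := by omega
      rw [h3] at this
      norm_num at this
      linarith
    have hhead : (∑ k ∈ Finset.range 3, (-t) ^ k / (Nat.factorial k : ℝ)) = 1 - t + t ^ 2 / 2 := by
      simp [Finset.sum_range_succ, Nat.factorial]
      ring
    rw [hsplit, hhead]
    linarith

lemma truncExp_hasDerivAt (n : ℕ) (t : ℝ) : HasDerivAt (truncExp (n + 1)) (-(truncExp n t)) t := by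
  have h : ∀ k ∈ Finset.range (n + 2), HasDerivAt (fun t : ℝ => (-t) ^ k / (Nat.factorial k : ℝ))
      ((k : ℝ) * (-t) ^ (k - 1) * (-1) / (Nat.factorial k : ℝ)) t := by
    intro k _
    have h1 : HasDerivAt (fun t : ℝ => -t) (-1) t := (hasDerivAt_id t).neg
    have h2 := (hasDerivAt_pow k (-t)).comp t h1
    exact h2.div_const _
  have hs := HasDerivAt.fun_sum h
  have hval : (∑ k ∈ Finset.range (n + 2), (k : ℝ) * (-t) ^ (k - 1) * (-1) / (Nat.factorial k : ℝ))
      = -(truncExp n t) := by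
    rw [Finset.sum_range_succ']
    simp only [Nat.cast_zero, zero_mul, mul_zero, zero_div, add_zero, Nat.cast_ofNat]
    have : ∀ i, ((i + 1 : ℕ) : ℝ) * (-t) ^ (i + 1 - 1) * (-1) / (Nat.factorial (i + 1) : ℝ)
        = -((-t) ^ i / (Nat.factorial i : ℝ)) := by
      intro i
      have hfi : (Nat.factorial i : ℝ) ≠ 0 := by
        exact_mod_cast (Nat.factorial_pos i).ne'
      rw [Nat.factorial_succ]
      push_cast
      field_simp
    simp only [this, Finset.sum_neg_distrib]
    rw [truncExp]
  rw [← hval]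
  exact hs

lemma truncExp_antitoneOn (n : ℕ) : AntitoneOn (truncExp (n + 1)) (Set.Icc (0 : ℝ) 1) := by
  have hdiff : Differentiable ℝ (truncExp (n + 1)) :=
    fun t => (truncExp_hasDerivAt n t).differentiableAt
  apply antitoneOn_of_deriv_nonpos (convex_Icc 0 1) hdiff.continuous.continuousOn
    hdiff.differentiableOn
  intro x hx
  rw [interior_Icc] at hx
  rw [(truncExp_hasDerivAt n x).deriv]
  simp only [neg_nonpos]
  exact truncExp_nonneg n hx.1.le hx.2.le

lemma diagonal_sum_eq {R ι : Type*} [Semiring R] [Fintype ι] [DecidableEq ι]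
    {s : Finset ℕ} (f : ℕ → ι → R) :
    (∑ k ∈ s, Matrix.diagonal (f k)) = Matrix.diagonal (fun i => ∑ k ∈ s, f k i) := by
  ext i j
  rw [Matrix.sum_apply]
  by_cases h : i = j
  · subst h; simp [Matrix.diagonal_apply_eq]
  · simp [Matrix.diagonal_apply_ne _ h]


/-- If `A` is Hermitian with all eigenvalues in `[κ, μ]`, `0 < κ ≤ μ`, `n ≥ 1` and `0 < τ`
with `τ · μ ≤ 1`, then `g_τ = ∑_{k=0}^{n} (1/k!) (−τ A)^k` satisfies
`‖g_τ‖₂ ≤ ∑_{k=0}^{n} (1/k!) (−τ κ)^k < 1`. -/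
theorem truncated_exp_matrix_norm_lt_one {N : ℕ} (A : Matrix (Fin N) (Fin N) ℂ)
    (hA : A.IsHermitian) (κ μ : ℝ) (hκ : 0 < κ) (hκμ : κ ≤ μ)
    (heig : ∀ i, hA.eigenvalues i ∈ Set.Icc κ μ)
    (n : ℕ) (hn : 1 ≤ n) (τ : ℝ) (hτ : 0 < τ) (hτμ : τ * μ ≤ 1) :
    ‖∑ k ∈ Finset.range (n + 1), ((Nat.factorial k : ℂ))⁻¹ • ((-(τ : ℂ)) • A) ^ k‖
        ≤ ∑ k ∈ Finset.range (n + 1), (-(τ * κ)) ^ k / (Nat.factorial k : ℝ) ∧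
      ∑ k ∈ Finset.range (n + 1), (-(τ * κ)) ^ k / (Nat.factorial k : ℝ) < 1 := by
  -- basic scalar facts
  have hτκ0 : 0 < τ * κ := mul_pos hτ hκ
  have hτκ1 : τ * κ ≤ 1 := le_trans (by nlinarith) hτμ
  have hRHS : (∑ k ∈ Finset.range (n + 1), (-(τ * κ)) ^ k / (Nat.factorial k : ℝ))
      = truncExp n (τ * κ) := rfl
  have hlt : truncExp n (τ * κ) < 1 := by
    have := truncExp_le n hn hτκ0.le hτκ1
    nlinarith
  refine ⟨?_, by rw [hRHS]; exact hlt⟩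
  rw [hRHS]
  -- matrix part
  set V : Matrix (Fin N) (Fin N) ℂ := (hA.eigenvectorUnitary : Matrix (Fin N) (Fin N) ℂ) with hV
  have hU1 : V * star V = 1 := (Matrix.mem_unitaryGroup_iff).mp hA.eigenvectorUnitary.2
  have hU2 : star V * V = 1 := (Matrix.mem_unitaryGroup_iff').mp hA.eigenvectorUnitary.2
  have hspec := hA.spectral_theorem
  -- conjugation commutes with powers
  have hconj : ∀ (B : Matrix (Fin N) (Fin N) ℂ) (k : ℕ),
      (V * B * star V) ^ k = V * B ^ k * star V := by
    intro B k
    induction k with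
    | zero => simpa using hU1.symm
    | succ k ih =>
      rw [pow_succ, ih, pow_succ]
      calc V * B ^ k * star V * (V * B * star V)
          = V * B ^ k * (star V * V) * B * star V := by
            simp only [Matrix.mul_assoc]
        _ = V * (B ^ k * B) * star V := by rw [hU2]; simp only [Matrix.mul_assoc, Matrix.mul_one]
  have step1 : (-(τ : ℂ)) • A =
      V * Matrix.diagonal (fun i => (-(τ : ℂ)) * (hA.eigenvalues i : ℂ)) * star V := by
    conv_lhs => rw [hspec, Unitary.conjStarAlgAut_apply]
    rw [← smul_mul_assoc, ← mul_smul_comm, ← Matrix.diagonal_smul]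
    congr 2
  have step2 : ∀ k, ((-(τ : ℂ)) • A) ^ k =
      V * Matrix.diagonal (fun i => ((-(τ : ℂ)) * (hA.eigenvalues i : ℂ)) ^ k) * star V := by
    intro k
    rw [step1, hconj, Matrix.diagonal_pow]
    congr 2
  set d : Fin N → ℂ := fun i => ((truncExp n (τ * hA.eigenvalues i) : ℝ) : ℂ) with hd
  have key : (∑ k ∈ Finset.range (n + 1), ((Nat.factorial k : ℂ))⁻¹ • ((-(τ : ℂ)) • A) ^ k)
      = V * Matrix.diagonal d * star V := by
    calc (∑ k ∈ Finset.range (n + 1), ((Nat.factorial k : ℂ))⁻¹ • ((-(τ : ℂ)) • A) ^ k)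
        = ∑ k ∈ Finset.range (n + 1),
            V * ((Nat.factorial k : ℂ))⁻¹ • Matrix.diagonal
              (fun i => ((-(τ : ℂ)) * (hA.eigenvalues i : ℂ)) ^ k) * star V := by
          refine Finset.sum_congr rfl fun k _ => ?_
          rw [step2 k, ← smul_mul_assoc, ← mul_smul_comm]
      _ = V * (∑ k ∈ Finset.range (n + 1), ((Nat.factorial k : ℂ))⁻¹ • Matrix.diagonal
              (fun i => ((-(τ : ℂ)) * (hA.eigenvalues i : ℂ)) ^ k)) * star V := by
          rw [← Finset.sum_mul, ← Finset.mul_sum]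
      _ = V * Matrix.diagonal d * star V := by
          congr 1
          congr 1
          have h1 : ∀ k ∈ Finset.range (n + 1), ((Nat.factorial k : ℂ))⁻¹ • Matrix.diagonal
              (fun i => ((-(τ : ℂ)) * (hA.eigenvalues i : ℂ)) ^ k)
              = Matrix.diagonal (fun i =>
                  ((Nat.factorial k : ℂ))⁻¹ * ((-(τ : ℂ)) * (hA.eigenvalues i : ℂ)) ^ k) := by
            intro k _
            rw [← Matrix.diagonal_smul]
            congr 1
          rw [Finset.sum_congr rfl h1, diagonal_sum_eq]
          have h2 : (fun i => ∑ k ∈ Finset.range (n + 1),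
              ((Nat.factorial k : ℂ))⁻¹ * ((-(τ : ℂ)) * (hA.eigenvalues i : ℂ)) ^ k) = d := by
            funext i
            rw [hd]
            simp only [truncExp]
            push_cast
            refine Finset.sum_congr rfl fun k _ => ?_
            rw [inv_mul_eq_div]
            congr 2
            ring
          rw [h2]
  rw [key]
  -- norms
  have hone : ‖(1 : Matrix (Fin N) (Fin N) ℂ)‖ ≤ 1 := by
    rw [Matrix.cstar_norm_def, map_one]
    exact ContinuousLinearMap.norm_id_le
  have hVnorm : ‖V‖ ≤ 1 := by
    have h := Matrix.l2_opNorm_conjTranspose_mul_self V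
    rw [← Matrix.star_eq_conjTranspose, hU2] at h
    nlinarith [norm_nonneg V, hone]
  have hVstar : ‖star V‖ ≤ 1 := by
    rw [Matrix.star_eq_conjTranspose, Matrix.l2_opNorm_conjTranspose]
    exact hVnorm
  have hC : 0 ≤ truncExp n (τ * κ) := truncExp_nonneg n hτκ0.le hτκ1
  have hentry : ∀ i, ‖d i‖ ≤ truncExp n (τ * κ) := by
    intro i
    obtain ⟨hκi, hμi⟩ := heig i
    have ht0 : 0 < τ * hA.eigenvalues i := by nlinarith
    have ht1 : τ * hA.eigenvalues i ≤ 1 := by nlinarith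
    rw [hd]
    simp only [Complex.norm_real, Real.norm_eq_abs]
    rw [abs_of_nonneg (truncExp_nonneg n ht0.le ht1)]
    obtain ⟨m, rfl⟩ : ∃ m, n = m + 1 := ⟨n - 1, by omega⟩
    exact truncExp_antitoneOn m ⟨hτκ0.le, hτκ1⟩ ⟨ht0.le, ht1⟩ (by nlinarith)
  have hdiag : ‖Matrix.diagonal d‖ ≤ truncExp n (τ * κ) := by
    rw [Matrix.l2_opNorm_def]
    refine ContinuousLinearMap.opNorm_le_bound _ hC fun x => ?_
    set C := truncExp n (τ * κ)
    have happ : ∀ i : Fin N,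
        (((Matrix.toEuclideanLin.trans LinearMap.toContinuousLinearMap) (Matrix.diagonal d)) x) i
          = d i * x i := by
      intro i
      simp [Matrix.toEuclideanLin_apply, Matrix.mulVec_diagonal]
    have key2 : (∑ i, ‖d i * x i‖ ^ 2) ≤ C ^ 2 * ∑ i, ‖x i‖ ^ 2 := by
      rw [Finset.mul_sum]
      refine Finset.sum_le_sum fun i _ => ?_
      rw [norm_mul, mul_pow]
      have h1 := hentry i
      have h2 : ‖d i‖ ^ 2 ≤ C ^ 2 := by nlinarith [norm_nonneg (d i)]
      exact mul_le_mul_of_nonneg_right h2 (sq_nonneg _)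
    refine le_trans (le_of_eq ?_) (le_trans (Real.sqrt_le_sqrt key2) (le_of_eq ?_))
    · rw [EuclideanSpace.norm_eq]
      congr 1
      refine Finset.sum_congr rfl fun i _ => ?_
      rw [happ i]
    · rw [Real.sqrt_mul (sq_nonneg C), Real.sqrt_sq hC, EuclideanSpace.norm_eq]
  calc ‖V * Matrix.diagonal d * star V‖
      ≤ ‖V * Matrix.diagonal d‖ * ‖star V‖ := Matrix.l2_opNorm_mul _ _
    _ ≤ ‖V * Matrix.diagonal d‖ := mul_le_of_le_one_right (norm_nonneg _) hVstar
    _ ≤ ‖V‖ * ‖Matrix.diagonal d‖ := Matrix.l2_opNorm_mul _ _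
    _ ≤ ‖Matrix.diagonal d‖ := mul_le_of_le_one_left (norm_nonneg _) hVnorm
    _ ≤ truncExp n (τ * κ) := hdiag
end

section
/- Let A ∈ ℂ^{N×N} be Hermitian positive semidefinite, let n be a natural number, and let τ ≥ 0 satisfy τ · ‖A‖₂ ≤ 1. Then ‖exp(−τ A) − Σ_{k=0}^{n} (1/k!) (−τ A)^k‖₂ ≤ (τ ‖A‖₂)^{n+1} / (n+1)!, where exp denotes the matrix exponential. -/
open scoped Matrix ComplexOrder Matrix.Norms.L2Operator

set_option maxRecDepth 4000

open Finset in
lemma alt_exp_remainder (y : ℝ) (hy : 0 ≤ y) (hy1 : y ≤ 1) (m : ℕ) :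
    |Real.exp (-y) - ∑ k ∈ range (m + 1), ((k.factorial : ℝ))⁻¹ * (-y) ^ k|
      ≤ y ^ (m + 1) / (m + 1).factorial := by
  set f : ℕ → ℝ := fun k => y ^ k / k.factorial with hfdef
  have hant : Antitone f := by
    apply antitone_nat_of_succ_le
    intro k
    simp only [hfdef]
    apply div_le_div₀ (pow_nonneg hy k) (pow_le_pow_of_le_one hy hy1 (Nat.le_succ k))
      (by positivity)
    exact_mod_cast Nat.factorial_le (Nat.le_succ k)
  have hl : Filter.Tendsto (fun j => ∑ i ∈ range j, (-1 : ℝ) ^ i * f i) Filter.atTop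
      (nhds (Real.exp (-y))) := by
    have hs : HasSum (fun i : ℕ => (-y) ^ i / i.factorial) (Real.exp (-y)) := by
      have h1 := (Real.summable_pow_div_factorial (-y)).hasSum
      rwa [show ∑' n : ℕ, (-y) ^ n / n.factorial = Real.exp (-y) by
        rw [Real.exp_eq_exp_ℝ, NormedSpace.exp_eq_tsum_div]] at h1
    have := hs.tendsto_sum_nat
    convert this using 2 with j
    apply Finset.sum_congr rfl
    intro i _
    simp only [hfdef]
    rw [neg_pow]
    ring
  have key : ∀ j, |Real.exp (-y) - ∑ i ∈ range j, (-1 : ℝ) ^ i * f i| ≤ f j := by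
    intro j
    have hfnn : 0 ≤ f j := by positivity
    rcases Nat.even_or_odd j with ⟨k, hk⟩ | ⟨k, hk⟩
    · have h1 : ∑ i ∈ range (2 * k), (-1 : ℝ) ^ i * f i ≤ Real.exp (-y) :=
        hant.alternating_series_le_tendsto hl k
      have h2 : Real.exp (-y) ≤ ∑ i ∈ range (2 * k + 1), (-1 : ℝ) ^ i * f i :=
        hant.tendsto_le_alternating_series hl k
      have hj : j = 2 * k := by omega
      subst hj
      rw [Finset.sum_range_succ] at h2
      have hpow : ((-1 : ℝ)) ^ (2 * k) = 1 := by simp [pow_mul]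
      rw [abs_le]
      constructor <;> nlinarith
    · have h1 : ∑ i ∈ range (2 * (k + 1)), (-1 : ℝ) ^ i * f i ≤ Real.exp (-y) :=
        hant.alternating_series_le_tendsto hl (k + 1)
      have h2 : Real.exp (-y) ≤ ∑ i ∈ range (2 * k + 1), (-1 : ℝ) ^ i * f i :=
        hant.tendsto_le_alternating_series hl k
      have hj : j = 2 * k + 1 := by omega
      subst hj
      rw [show 2 * (k + 1) = 2 * k + 1 + 1 by ring, Finset.sum_range_succ] at h1
      have hpow : ((-1 : ℝ)) ^ (2 * k + 1) = -1 := by simp [pow_succ, pow_mul]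
      rw [abs_le]
      constructor <;> nlinarith
    
  have := key (m + 1)
  have hsum : ∑ i ∈ range (m + 1), (-1 : ℝ) ^ i * f i
      = ∑ k ∈ range (m + 1), ((k.factorial : ℝ))⁻¹ * (-y) ^ k := by
    apply Finset.sum_congr rfl
    intro i _
    simp only [hfdef]
    rw [neg_pow]
    ring
  rw [hsum] at this
  simpa [hfdef, div_eq_mul_inv] using this

/-- If `A` is Hermitian positive semidefinite and `0 ≤ τ` with `τ · ‖A‖₂ ≤ 1`, then
`‖exp(−τ A) − ∑_{k=0}^{n} (1/k!) (−τ A)^k‖₂ ≤ (τ ‖A‖₂)^{n+1} / (n+1)!`. -/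
theorem matrix_exp_taylor_remainder {N : ℕ} (A : Matrix (Fin N) (Fin N) ℂ)
    (hA : A.PosSemidef) (n : ℕ) (τ : ℝ) (hτ : 0 ≤ τ) (hτA : τ * ‖A‖ ≤ 1) :
    ‖NormedSpace.exp ((-(τ : ℂ)) • A)
        - ∑ k ∈ Finset.range (n + 1), ((Nat.factorial k : ℂ))⁻¹ • ((-(τ : ℂ)) • A) ^ k‖
      ≤ (τ * ‖A‖) ^ (n + 1) / (Nat.factorial (n + 1) : ℝ) := by
  letI : CStarAlgebra (Matrix (Fin N) (Fin N) ℂ) := Matrix.instCStarAlgebra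
  have hsa : IsSelfAdjoint A := hA.isHermitian.isSelfAdjoint
  -- real smul vs complex smul
  have hreal : ∀ (M : Matrix (Fin N) (Fin N) ℂ) (r : ℝ), ((r : ℂ)) • M = r • M := by
    intro M r
    ext i j
    simp [Matrix.smul_apply, Complex.real_smul]
  have hB : (-(τ : ℂ)) • A = cfc (fun x : ℝ => -τ * x) A := by
    rw [cfc_const_mul_id (-τ) A hsa, ← hreal A (-τ), Complex.ofReal_neg]
  have hBsa : IsSelfAdjoint ((-(τ : ℂ)) • A) := by
    rw [hB]; exact cfc_predicate _ A
  have hexp : NormedSpace.exp ((-(τ : ℂ)) • A)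
      = cfc (fun x : ℝ => Real.exp (-τ * x)) A := by
    calc NormedSpace.exp ((-(τ : ℂ)) • A) = NormedSpace.exp ((-(τ : ℂ)) • A) := by
          rfl
      _ = cfc Real.exp ((-(τ : ℂ)) • A) := (CFC.real_exp_eq_normedSpace_exp (ha := hBsa)).symm
      _ = cfc (fun x : ℝ => Real.exp (-τ * x)) A := by
          rw [hB, ← cfc_comp' Real.exp (fun x : ℝ => -τ * x) A]
  have hpow : ∀ k : ℕ, ((-(τ : ℂ)) • A) ^ k = cfc (fun x : ℝ => (-τ * x) ^ k) A := by
    intro k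
    rw [hB, ← cfc_pow (fun x : ℝ => -τ * x) k A]
  have hsum : ∑ k ∈ Finset.range (n + 1), ((Nat.factorial k : ℂ))⁻¹ • ((-(τ : ℂ)) • A) ^ k
      = cfc (fun x : ℝ => ∑ k ∈ Finset.range (n + 1),
          ((Nat.factorial k : ℝ))⁻¹ * (-τ * x) ^ k) A := by
    have : (fun x : ℝ => ∑ k ∈ Finset.range (n + 1), ((Nat.factorial k : ℝ))⁻¹ * (-τ * x) ^ k)
        = ∑ k ∈ Finset.range (n + 1), (fun x : ℝ => ((Nat.factorial k : ℝ))⁻¹ * (-τ * x) ^ k) := by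
      ext x
      simp
    rw [this, cfc_sum _ A _ (by intro i _; fun_prop)]
    apply Finset.sum_congr rfl
    intro k _
    rw [cfc_const_mul ((Nat.factorial k : ℝ))⁻¹ (fun x : ℝ => (-τ * x) ^ k) A (by fun_prop),
      ← hpow k]
    rw [show ((Nat.factorial k : ℂ)) = (((Nat.factorial k : ℝ)) : ℂ) from by push_cast; rfl,
      ← Complex.ofReal_inv]
    exact hreal _ _
  rw [hexp, hsum, ← cfc_sub (fun x : ℝ => Real.exp (-τ * x))
    (fun x : ℝ => ∑ k ∈ Finset.range (n + 1), ((Nat.factorial k : ℝ))⁻¹ * (-τ * x) ^ k) A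
    (by fun_prop) (by fun_prop)]
  refine norm_cfc_le (by positivity) ?_
  intro x hx
  have hx' := hx
  rw [Matrix.IsHermitian.spectrum_real_eq_range_eigenvalues hA.isHermitian] at hx'
  obtain ⟨i, rfl⟩ := hx'
  haveI : Nonempty (Fin N) := ⟨i⟩
  haveI : Nontrivial (Matrix (Fin N) (Fin N) ℂ) := by
    refine ⟨1, 0, fun h => ?_⟩
    have := congr_fun (congr_fun h i) i
    simp at this
  have h0 : 0 ≤ hA.isHermitian.eigenvalues i := hA.eigenvalues_nonneg i
  have h1 : hA.isHermitian.eigenvalues i ≤ ‖A‖ :=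
    le_trans (le_abs_self _) (spectrum.norm_le_norm_of_mem hx)
  have h2 : τ * hA.isHermitian.eigenvalues i ≤ 1 :=
    le_trans (mul_le_mul_of_nonneg_left h1 hτ) hτA
  have key := alt_exp_remainder (τ * hA.isHermitian.eigenvalues i) (mul_nonneg hτ h0) h2 n
  rw [Real.norm_eq_abs]
  simp only [neg_mul] at key ⊢
  refine le_trans key ?_
  gcongr
end

section
/- Let A ∈ ℂ^{N×N} be Hermitian positive semidefinite, let n be a natural number, let τ ≥ 0 satisfy τ · ‖A‖₂ ≤ 1, and set g_τ = Σ_{j=0}^{n} (1/j!) (−τ A)^j. Then for every natural number k: ‖exp(−k τ A) − g_τ^{k}‖₂ ≤ k · (τ ‖A‖₂)^{n+1} / (n+1)!, where exp denotes the matrix exponential. -/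
open scoped Matrix ComplexOrder Matrix.Norms.L2Operator

noncomputable instance matCStarAlgebraAux {N : ℕ} : CStarAlgebra (Matrix (Fin N) (Fin N) ℂ) :=
  { (inferInstance : NormedRing _), (inferInstance : StarRing _),
    (inferInstance : CompleteSpace _), (inferInstance : CStarRing _),
    (inferInstance : NormedAlgebra ℂ _), (inferInstance : StarModule ℂ _) with }

/-- Bounds for alternating sums of antitone nonnegative sequences. -/
lemma alt_sum_bounds_s13 (b : ℕ → ℝ) (hb : ∀ i, 0 ≤ b i) (hmono : ∀ i, b (i + 1) ≤ b i) (L : ℕ) :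
    0 ≤ ∑ i ∈ Finset.range L, (-1 : ℝ) ^ i * b i ∧
      ∑ i ∈ Finset.range L, (-1 : ℝ) ^ i * b i ≤ b 0 := by
  set S := fun m => ∑ i ∈ Finset.range m, (-1 : ℝ) ^ i * b i with hS
  have heven : ∀ m : ℕ, (-1 : ℝ) ^ (2 * m) = 1 := by
    intro m; rw [pow_mul]; norm_num
  have hodd : ∀ m : ℕ, (-1 : ℝ) ^ (2 * m + 1) = -1 := by
    intro m; rw [pow_succ, heven]; norm_num
  have hstep : ∀ m, S (m + 1) = S m + (-1 : ℝ) ^ m * b m := by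
    intro m; simp [hS, Finset.sum_range_succ]
  have key : ∀ k, 0 ≤ S (2 * k) ∧ S (2 * k + 1) ≤ b 0 := by
    intro k
    induction k with
    | zero => simp [hS, Finset.sum_range_one]
    | succ k ih =>
      have a0 := hstep (2 * k)
      rw [heven] at a0
      have a1 := hstep (2 * k + 1)
      rw [hodd] at a1
      rw [show 2 * k + 1 + 1 = 2 * k + 2 by ring] at a1
      have a2 := hstep (2 * k + 2)
      have hsgn : (-1 : ℝ) ^ (2 * k + 2) = 1 := by
        rw [show 2 * k + 2 = 2 * (k + 1) by ring]; exact heven (k + 1)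
      rw [hsgn] at a2
      rw [show 2 * k + 2 + 1 = 2 * k + 3 by ring] at a2
      have hm0 := hmono (2 * k)
      have hm1 := hmono (2 * k + 1)
      rw [show 2 * k + 1 + 1 = 2 * k + 2 by ring] at hm1
      constructor
      · rw [show 2 * (k + 1) = 2 * k + 2 by ring]
        linarith [ih.1]
      · rw [show 2 * (k + 1) + 1 = 2 * k + 3 by ring]
        linarith [ih.2]
  rcases Nat.even_or_odd L with ⟨k, hk⟩ | ⟨k, hk⟩
  · have hk' : L = 2 * k := by omega
    subst hk'
    refine ⟨(key k).1, ?_⟩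
    have hs := hstep (2 * k)
    rw [heven] at hs
    linarith [(key k).2, hb (2 * k)]
  · have hk' : L = 2 * k + 1 := by omega
    subst hk'
    refine ⟨?_, (key k).2⟩
    have hs := hstep (2 * k)
    rw [heven] at hs
    linarith [(key k).1, hb (2 * k)]

lemma fact_term_nonneg (y : ℝ) (hy0 : 0 ≤ y) (i : ℕ) :
    0 ≤ y ^ i / (Nat.factorial i : ℝ) :=
  div_nonneg (pow_nonneg hy0 i) (Nat.cast_nonneg _)

lemma fact_term_antitone (y : ℝ) (hy0 : 0 ≤ y) (hy1 : y ≤ 1) (i : ℕ) :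
    y ^ (i + 1) / (Nat.factorial (i + 1) : ℝ) ≤ y ^ i / (Nat.factorial i : ℝ) := by
  apply div_le_div₀ (pow_nonneg hy0 i)
  · calc y ^ (i + 1) = y ^ i * y := by ring
      _ ≤ y ^ i * 1 := mul_le_mul_of_nonneg_left hy1 (pow_nonneg hy0 i)
      _ = y ^ i := by ring
  · exact_mod_cast Nat.factorial_pos i
  · exact_mod_cast Nat.factorial_le (Nat.le_succ i)

/-- Partial sums of the Taylor series of `exp (-y)` lie in `[0, 1]` for `y ∈ [0,1]`. -/
lemma taylor_partial_sum_abs_le_one (y : ℝ) (hy0 : 0 ≤ y) (hy1 : y ≤ 1) (m : ℕ) :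
    |∑ j ∈ Finset.range m, (-y) ^ j / (Nat.factorial j : ℝ)| ≤ 1 := by
  have hrw : ∀ j : ℕ, (-y) ^ j / (Nat.factorial j : ℝ)
      = (-1 : ℝ) ^ j * (y ^ j / (Nat.factorial j : ℝ)) := by
    intro j; rw [neg_pow]; ring
  rw [Finset.sum_congr rfl fun j _ => hrw j]
  have h := alt_sum_bounds_s13 (fun i => y ^ i / (Nat.factorial i : ℝ))
    (fact_term_nonneg y hy0) (fact_term_antitone y hy0 hy1) m
  rw [abs_le]
  constructor
  · linarith [h.1]
  · calc _ ≤ y ^ 0 / (Nat.factorial 0 : ℝ) := h.2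
      _ = 1 := by norm_num

/-- Taylor remainder bound for `exp (-y)`, `y ∈ [0, 1]`. -/
lemma exp_neg_taylor_remainder (y : ℝ) (hy0 : 0 ≤ y) (hy1 : y ≤ 1) (n : ℕ) :
    |Real.exp (-y) - ∑ j ∈ Finset.range (n + 1), (-y) ^ j / (Nat.factorial j : ℝ)|
      ≤ y ^ (n + 1) / (Nat.factorial (n + 1) : ℝ) := by
  set S := fun m => ∑ j ∈ Finset.range m, (-y) ^ j / (Nat.factorial j : ℝ) with hSdef
  have hsum : Filter.Tendsto S Filter.atTop (nhds (Real.exp (-y))) := by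
    have h := NormedSpace.expSeries_div_hasSum_exp (𝔸 := ℝ) (-y)
    rw [← Real.exp_eq_exp_ℝ] at h
    exact h.tendsto_sum_nat
  set b := fun i => y ^ (n + 1 + i) / (Nat.factorial (n + 1 + i) : ℝ) with hbdef
  have hbn : ∀ i, 0 ≤ b i := fun i => fact_term_nonneg y hy0 _
  have hbm : ∀ i, b (i + 1) ≤ b i := by
    intro i
    have := fact_term_antitone y hy0 hy1 (n + 1 + i)
    simpa [hbdef, show n + 1 + (i + 1) = (n + 1 + i) + 1 by ring] using this
  have htail : ∀ m, |S (n + 1 + m) - S (n + 1)| ≤ y ^ (n + 1) / (Nat.factorial (n + 1) : ℝ) := by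
    intro m
    have h1 : S (n + 1 + m) - S (n + 1)
        = ∑ i ∈ Finset.range m, (-y) ^ (n + 1 + i) / (Nat.factorial (n + 1 + i) : ℝ) := by
      simp only [hSdef, Finset.sum_range_add]
      ring
    have h2 : ∀ i : ℕ, (-y) ^ (n + 1 + i) / (Nat.factorial (n + 1 + i) : ℝ)
        = (-1 : ℝ) ^ (n + 1) * ((-1 : ℝ) ^ i * b i) := by
      intro i
      rw [hbdef, neg_pow, pow_add]
      ring
    rw [h1, Finset.sum_congr rfl fun i _ => h2 i, ← Finset.mul_sum, abs_mul, abs_pow, abs_neg,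
      abs_one, one_pow, one_mul]
    have h3 := alt_sum_bounds_s13 b hbn hbm m
    have hb0 : b 0 = y ^ (n + 1) / (Nat.factorial (n + 1) : ℝ) := by simp [hbdef]
    rw [abs_le]
    exact ⟨by linarith [h3.1], by rw [← hb0]; exact h3.2⟩
  have hmono_comp : Filter.Tendsto (fun m : ℕ => n + 1 + m) Filter.atTop Filter.atTop :=
    Filter.tendsto_atTop_mono (fun m => Nat.le_add_left m (n + 1)) Filter.tendsto_id
  have hlim : Filter.Tendsto (fun m => |S (n + 1 + m) - S (n + 1)|) Filter.atTop
      (nhds |Real.exp (-y) - S (n + 1)|) :=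
    ((hsum.comp hmono_comp).sub_const _).abs
  exact le_of_tendsto hlim (Filter.Eventually.of_forall htail)

/-- If `A` is Hermitian positive semidefinite, `0 ≤ τ` with `τ · ‖A‖₂ ≤ 1`, and
`g_τ = ∑_{j=0}^{n} (1/j!) (−τ A)^j`, then for every `k`,
`‖exp(−k τ A) − g_τ^k‖₂ ≤ k (τ ‖A‖₂)^{n+1} / (n+1)!`. -/
theorem matrix_exp_pow_taylor_remainder {N : ℕ} (A : Matrix (Fin N) (Fin N) ℂ)
    (hA : A.PosSemidef) (n : ℕ) (τ : ℝ) (hτ : 0 ≤ τ) (hτA : τ * ‖A‖ ≤ 1) :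
    ∀ k : ℕ,
      ‖NormedSpace.exp ((-((k : ℂ) * (τ : ℂ))) • A)
          - (∑ j ∈ Finset.range (n + 1), ((Nat.factorial j : ℂ))⁻¹ • ((-(τ : ℂ)) • A) ^ j) ^ k‖
        ≤ (k : ℝ) * (τ * ‖A‖) ^ (n + 1) / (Nat.factorial (n + 1) : ℝ) := by
  intro k
  rcases eq_or_ne N 0 with rfl | hN
  · have h0 : NormedSpace.exp ((-((k : ℂ) * (τ : ℂ))) • A)
        - (∑ j ∈ Finset.range (n + 1), ((Nat.factorial j : ℂ))⁻¹ • ((-(τ : ℂ)) • A) ^ j) ^ k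
        = 0 := Subsingleton.elim _ _
    rw [h0, norm_zero]
    positivity
  haveI : NeZero N := ⟨hN⟩
  have hsa : IsSelfAdjoint A := hA.1
  set ε : ℝ := (τ * ‖A‖) ^ (n + 1) / (Nat.factorial (n + 1) : ℝ) with hεdef
  have hε : 0 ≤ ε := by positivity
  -- spectrum facts
  have hspec : ∀ x ∈ spectrum ℝ A, 0 ≤ x ∧ x ≤ ‖A‖ := by
    intro x hx
    constructor
    · rw [hA.isHermitian.spectrum_real_eq_range_eigenvalues] at hx
      obtain ⟨i, rfl⟩ := hx
      exact hA.eigenvalues_nonneg i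
    · have h := spectrum.norm_le_norm_of_mem hx
      rw [Real.norm_eq_abs] at h
      exact (le_abs_self x).trans h
  have hyx : ∀ x ∈ spectrum ℝ A, 0 ≤ τ * x ∧ τ * x ≤ 1 := by
    intro x hx
    obtain ⟨h0, h1⟩ := hspec x hx
    exact ⟨mul_nonneg hτ h0, le_trans (mul_le_mul_of_nonneg_left h1 hτ) hτA⟩
  -- cfc representations
  have exp_cfc : ∀ r : ℝ, NormedSpace.exp (((r : ℝ) : ℂ) • A)
      = cfc (fun x : ℝ => Real.exp (r * x)) A := by
    intro r
    have hra : IsSelfAdjoint (r • A) := IsSelfAdjoint.smul (star_trivial r) hsa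
    rw [Complex.coe_smul,
      ← CFC.real_exp_eq_normedSpace_exp hra, ← cfc_comp_const_mul r Real.exp A]
  set G : Matrix (Fin N) (Fin N) ℂ :=
    ∑ j ∈ Finset.range (n + 1), ((Nat.factorial j : ℂ))⁻¹ • ((-(τ : ℂ)) • A) ^ j with hGdef
  set gf : ℝ → ℝ := fun x => ∑ j ∈ Finset.range (n + 1),
    (-(τ * x)) ^ j / (Nat.factorial j : ℝ) with hgfdef
  have g_cfc : G = cfc gf A := by
    have hfun : gf = ∑ j ∈ Finset.range (n + 1),
        (fun x : ℝ => (-(τ * x)) ^ j / (Nat.factorial j : ℝ)) := by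
      ext x; simp [hgfdef]
    rw [hfun, cfc_sum _ A _ (by intro i _; fun_prop)]
    rw [hGdef]
    refine Finset.sum_congr rfl fun j hj => ?_
    have e1 : (-(τ : ℂ)) • A = ((-τ : ℝ) : ℂ) • A := by
      congr 1
      rw [Complex.ofReal_neg]
    have e2 : ((Nat.factorial j : ℂ))⁻¹ = (((Nat.factorial j : ℝ)⁻¹ : ℝ) : ℂ) := by
      push_cast; ring
    rw [e1, e2, Complex.coe_smul, Complex.coe_smul]
    have e3 : (-τ : ℝ) • A = cfc (fun x : ℝ => -τ * x) A :=
      (cfc_const_mul_id (-τ) A hsa).symm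
    rw [e3, ← cfc_pow (fun x : ℝ => -τ * x) j A (by fun_prop),
      ← cfc_smul ((Nat.factorial j : ℝ))⁻¹ (fun x : ℝ => (-τ * x) ^ j) A (by fun_prop)]
    apply cfc_congr
    intro x _
    show (Nat.factorial j : ℝ)⁻¹ • (-τ * x) ^ j = (-(τ * x)) ^ j / (Nat.factorial j : ℝ)
    rw [show (-(τ * x)) = -τ * x by ring, smul_eq_mul]
    ring
  -- norm bounds
  have hGnorm : ‖G‖ ≤ 1 := by
    rw [g_cfc]
    apply norm_cfc_le zero_le_one
    intro x hx
    obtain ⟨h0, h1⟩ := hyx x hx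
    rw [Real.norm_eq_abs]
    exact taylor_partial_sum_abs_le_one (τ * x) h0 h1 (n + 1)
  have e_coe : ((-τ : ℝ) : ℂ) = -(τ : ℂ) := by push_cast; ring
  have hE1norm : ‖NormedSpace.exp ((-(τ : ℂ)) • A)‖ ≤ 1 := by
    rw [← e_coe, exp_cfc (-τ)]
    apply norm_cfc_le zero_le_one
    intro x hx
    obtain ⟨h0, _⟩ := hyx x hx
    rw [Real.norm_eq_abs, Real.abs_exp, Real.exp_le_one_iff]
    nlinarith
  have hEGnorm : ‖NormedSpace.exp ((-(τ : ℂ)) • A) - G‖ ≤ ε := by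
    rw [← e_coe, exp_cfc (-τ), g_cfc, ← cfc_sub (fun x : ℝ => Real.exp (-τ * x)) gf A
      (by fun_prop) (by rw [hgfdef]; fun_prop)]
    apply norm_cfc_le hε
    intro x hx
    obtain ⟨h0, h1⟩ := hyx x hx
    obtain ⟨hx0, hx1⟩ := hspec x hx
    rw [Real.norm_eq_abs]
    have h2 : -τ * x = -(τ * x) := by ring
    rw [h2, hgfdef]
    calc |Real.exp (-(τ * x)) - ∑ j ∈ Finset.range (n + 1),
        (-(τ * x)) ^ j / (Nat.factorial j : ℝ)|
        ≤ (τ * x) ^ (n + 1) / (Nat.factorial (n + 1) : ℝ) :=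
          exp_neg_taylor_remainder (τ * x) h0 h1 n
      _ ≤ ε := by
          rw [hεdef]
          gcongr
  -- main induction
  induction k with
  | zero =>
    rw [show (-(((0 : ℕ) : ℂ) * (τ : ℂ))) • A = 0 by
      simp only [Nat.cast_zero, zero_mul, neg_zero, zero_smul]]
    rw [NormedSpace.exp_zero, pow_zero, sub_self, norm_zero, Nat.cast_zero, zero_mul, zero_div]
  | succ k ih =>
    have hsplit : (-(((k + 1 : ℕ) : ℂ) * (τ : ℂ))) • A
        = ((-(τ : ℂ)) • A) + ((-((k : ℂ) * (τ : ℂ))) • A) := by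
      rw [← add_smul]; congr 1; push_cast; ring
    have hcomm : Commute ((-(τ : ℂ)) • A) ((-((k : ℂ) * (τ : ℂ))) • A) :=
      ((Commute.refl A).smul_left _).smul_right _
    have hexp : NormedSpace.exp ((-(((k + 1 : ℕ) : ℂ) * (τ : ℂ))) • A)
        = NormedSpace.exp ((-(τ : ℂ)) • A) * NormedSpace.exp ((-((k : ℂ) * (τ : ℂ))) • A) := by
      let +nondep : NormedAlgebra ℚ (Matrix (Fin N) (Fin N) ℂ) := .restrictScalars ℚ ℂ _
      rw [hsplit, NormedSpace.exp_add_of_commute hcomm]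
    set E1 := NormedSpace.exp ((-(τ : ℂ)) • A) with hE1def
    set Ek := NormedSpace.exp ((-((k : ℂ) * (τ : ℂ))) • A) with hEkdef
    have key : NormedSpace.exp ((-(((k + 1 : ℕ) : ℂ) * (τ : ℂ))) • A) - G ^ (k + 1)
        = E1 * (Ek - G ^ k) + (E1 - G) * G ^ k := by
      rw [hexp, pow_succ']
      noncomm_ring
    have hGk : ‖G ^ k‖ ≤ 1 := by
      calc ‖G ^ k‖ ≤ ‖G‖ ^ k := norm_pow_le G k
        _ ≤ 1 ^ k := pow_le_pow_left₀ (norm_nonneg G) hGnorm k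
        _ = 1 := one_pow k
    rw [key]
    have h1 : ‖E1 * (Ek - G ^ k)‖ ≤ 1 * ((k : ℝ) * ε) := by
      refine le_trans (norm_mul_le _ _) ?_
      apply mul_le_mul hE1norm ?_ (norm_nonneg _) zero_le_one
      calc ‖Ek - G ^ k‖
          ≤ (k : ℝ) * (τ * ‖A‖) ^ (n + 1) / (Nat.factorial (n + 1) : ℝ) := ih
        _ = (k : ℝ) * ε := by rw [hεdef]; ring
    have h2 : ‖(E1 - G) * G ^ k‖ ≤ ε * 1 := by
      refine le_trans (norm_mul_le _ _) ?_
      exact mul_le_mul hEGnorm hGk (norm_nonneg _) hε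
    calc ‖E1 * (Ek - G ^ k) + (E1 - G) * G ^ k‖
        ≤ ‖E1 * (Ek - G ^ k)‖ + ‖(E1 - G) * G ^ k‖ := norm_add_le _ _
      _ ≤ 1 * ((k : ℝ) * ε) + ε * 1 := add_le_add h1 h2
      _ = ((k + 1 : ℕ) : ℝ) * (τ * ‖A‖) ^ (n + 1) / (Nat.factorial (n + 1) : ℝ) := by
          rw [hεdef]; push_cast; ring
end

section
/- Let A ∈ ℂ^{N×N} be Hermitian and let τ ≥ 0 satisfy τ · ‖A‖₂ ≤ 1. Then the matrix G_τ = Σ_{k=0}^{3} (1/k!) (i τ A)^k satisfies ‖G_τ‖₂ ≤ 1, and consequently ‖G_τ^{j}‖₂ ≤ 1 for every natural number j. -/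
open scoped Matrix Matrix.Norms.L2Operator

noncomputable instance matrixCStarAlgebra {N : ℕ} :
    CStarAlgebra (Matrix (Fin N) (Fin N) ℂ) := Matrix.instCStarAlgebra

/-- If `A` is Hermitian and `0 ≤ τ` with `τ · ‖A‖₂ ≤ 1`, then
`G_τ = ∑_{k=0}^{3} (1/k!) (i τ A)^k` satisfies `‖G_τ‖₂ ≤ 1`, and consequently
`‖G_τ^j‖₂ ≤ 1` for every natural number `j`. -/
theorem third_order_unitary_approx_norm_le_one {N : ℕ} (A : Matrix (Fin N) (Fin N) ℂ)
    (hA : A.IsHermitian) (τ : ℝ) (hτ : 0 ≤ τ) (hτA : τ * ‖A‖ ≤ 1) :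
    ‖∑ k ∈ Finset.range 4, ((Nat.factorial k : ℂ))⁻¹ • ((Complex.I * (τ : ℂ)) • A) ^ k‖ ≤ 1 ∧
      ∀ j : ℕ,
        ‖(∑ k ∈ Finset.range 4, ((Nat.factorial k : ℂ))⁻¹ • ((Complex.I * (τ : ℂ)) • A) ^ k) ^ j‖
          ≤ 1 := by
  rcases Nat.eq_zero_or_pos N with hN | hN
  · subst hN
    have hz : ∀ x : Matrix (Fin 0) (Fin 0) ℂ, ‖x‖ = 0 := fun x => by
      rw [Subsingleton.elim x 0, norm_zero]
    exact ⟨by rw [hz]; norm_num, fun j => by rw [hz]; norm_num⟩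
  haveI : Nonempty (Fin N) := Fin.pos_iff_nonempty.mp hN
  have hsa : IsSelfAdjoint A := hA
  set q : Polynomial ℂ := ∑ k ∈ Finset.range 4,
    Polynomial.C (((Nat.factorial k : ℂ))⁻¹ * (Complex.I * (τ : ℂ)) ^ k) * Polynomial.X ^ k
    with hq
  set G := ∑ k ∈ Finset.range 4,
      ((Nat.factorial k : ℂ))⁻¹ • ((Complex.I * (τ : ℂ)) • A) ^ k with hGdef
  have hGq : G = Polynomial.aeval A q := by
    rw [hGdef, hq, map_sum]
    refine Finset.sum_congr rfl fun k _ => ?_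
    rw [map_mul, Polynomial.aeval_C, map_pow, Polynomial.aeval_X, ← Algebra.smul_def,
      smul_pow, smul_smul]
  -- G is star-normal
  have hnormal : IsStarNormal G := by
    constructor
    rw [hGdef, star_sum]
    refine Commute.sum_left _ _ _ fun k _ => Commute.sum_right _ _ _ fun l _ => ?_
    rw [star_smul, star_pow, star_smul, hsa.star_eq, smul_pow, smul_pow]
    simp only [smul_smul]
    exact Commute.smul_right
      (Commute.smul_left ((Commute.refl A).pow_pow k l)
        (star ((Nat.factorial k : ℂ))⁻¹ * (star (Complex.I * (τ:ℂ))) ^ k))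
      (((Nat.factorial l : ℂ))⁻¹ * (Complex.I * (τ:ℂ)) ^ l)
  -- norm of 1 is at most 1
  have h1 : ‖(1 : Matrix (Fin N) (Fin N) ℂ)‖ ≤ 1 := by
    have h := CStarRing.norm_star_mul_self (x := (1 : Matrix (Fin N) (Fin N) ℂ))
    rw [star_one, one_mul] at h
    nlinarith [norm_nonneg (1 : Matrix (Fin N) (Fin N) ℂ)]
  -- main spectral bound
  have hG : ‖G‖ ≤ 1 := by
    have hrad := IsStarNormal.spectralRadius_eq_nnnorm G
    have hbound : spectralRadius ℂ G ≤ 1 := by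
      refine iSup₂_le fun z hz => ?_
      rw [hGq, spectrum.map_polynomial_aeval_of_nonempty A q (spectrum.nonempty A)] at hz
      obtain ⟨μ, hμ, hzμ⟩ := hz
      -- μ is real
      have hre : μ = (μ.re : ℂ) := hsa.mem_spectrum_eq_re hμ
      have hμn : ‖μ‖ ≤ ‖A‖ := by
        calc ‖μ‖ ≤ ‖A‖ * ‖(1 : Matrix (Fin N) (Fin N) ℂ)‖ := spectrum.norm_le_norm_mul_of_mem hμ
        _ ≤ ‖A‖ * 1 := by gcongr
        _ = ‖A‖ := mul_one _
      set x : ℝ := μ.re with hx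
      set t : ℝ := τ * x with ht
      have hA0 : (0:ℝ) ≤ ‖A‖ := norm_nonneg A
      have habs : |x| ≤ ‖A‖ := by
        rw [hre, Complex.norm_real] at hμn; exact hμn
      have ht1 : t ^ 2 ≤ 1 := by
        have h1t : |t| ≤ 1 := by
          rw [ht, abs_mul, abs_of_nonneg hτ]
          calc τ * |x| ≤ τ * ‖A‖ := by gcongr
          _ ≤ 1 := hτA
        nlinarith [abs_nonneg t, sq_abs t]
      -- compute z
      have hzval : z = ((1 - t ^ 2 / 2 : ℝ) : ℂ) + ((t - t ^ 3 / 6 : ℝ) : ℂ) * Complex.I := by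
        rw [← hzμ, hre, hq]
        simp only [Polynomial.eval_finset_sum, Polynomial.eval_mul, Polynomial.eval_C,
          Polynomial.eval_pow, Polynomial.eval_X]
        rw [Finset.sum_range_succ, Finset.sum_range_succ, Finset.sum_range_succ,
          Finset.sum_range_one]
        simp only [Nat.factorial]
        push_cast [ht]
        linear_combination ((τ:ℂ)^2*(x:ℂ)^2/2 + Complex.I*((τ:ℂ)^3*(x:ℂ)^3)/6) *
          Complex.I_sq
      have hsq : ‖z‖ ^ 2 ≤ 1 := by
        rw [hzval, Complex.norm_add_mul_I,
          Real.sq_sqrt (by positivity)]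
        nlinarith [mul_nonneg (pow_nonneg (sq_nonneg t) 2) (by linarith : (0:ℝ) ≤ 1 - t ^ 2),
          sq_nonneg t, sq_nonneg (t ^ 2)]
      have hz1 : ‖z‖ ≤ 1 := by nlinarith [norm_nonneg z]
      simpa [← ENNReal.coe_one, ENNReal.coe_le_coe, ← NNReal.coe_le_coe] using hz1
    rw [hrad] at hbound
    have : (‖G‖₊ : ℝ) ≤ 1 := by exact_mod_cast hbound
    simpa using this
  refine ⟨hG, fun j => ?_⟩
  cases j with
  | zero => simp only [pow_zero]; exact h1
  | succ n =>
    exact le_trans (norm_pow_le' G (Nat.succ_pos n)) (pow_le_one₀ (norm_nonneg G) hG)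
end

section
/- Let A ∈ ℂ^{N×N} be Hermitian, let n be a natural number, and let τ ≥ 0. Then ‖exp(i τ A) − Σ_{k=0}^{n} (1/k!) (i τ A)^k‖₂ ≤ (τ ‖A‖₂)^{n+1} / (n+1)!, where exp denotes the matrix exponential and i the imaginary unit. -/
open scoped Matrix Matrix.Norms.L2Operator
open NormedSpace

private noncomputable def myS {N : ℕ} (B : Matrix (Fin N) (Fin N) ℂ) (n : ℕ) (t : ℝ) :
    Matrix (Fin N) (Fin N) ℂ :=
  ∑ k ∈ Finset.range (n + 1), ((Nat.factorial k : ℂ))⁻¹ • (t • B) ^ k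

private lemma myS_cont {N : ℕ} (B : Matrix (Fin N) (Fin N) ℂ) (n : ℕ) :
    Continuous (myS B n) := by
  unfold myS; fun_prop

private lemma myS_zero {N : ℕ} (B : Matrix (Fin N) (Fin N) ℂ) (n : ℕ) : myS B n 0 = 1 := by
  rw [myS, Finset.sum_eq_single 0]
  · simp
  · intro k _ hk; simp [zero_smul, zero_pow hk]
  · simp

private lemma hexp {N : ℕ} (B : Matrix (Fin N) (Fin N) ℂ) (t : ℝ) :
    HasDerivAt (fun u : ℝ => exp (u • B)) (B * exp (t • B)) t := by
  have := hasDerivAt_exp_smul_const' (𝕂 := ℝ) B t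
  simpa using this

private lemma exp_cont {N : ℕ} (B : Matrix (Fin N) (Fin N) ℂ) :
    Continuous (fun u : ℝ => exp (u • B)) :=
  continuous_iff_continuousAt.mpr fun t => (hexp B t).continuousAt

private lemma myS_deriv {N : ℕ} (B : Matrix (Fin N) (Fin N) ℂ) (n : ℕ) (t : ℝ) :
    HasDerivAt (myS B (n + 1)) (B * myS B n t) t := by
  have hterm : ∀ k : ℕ, HasDerivAt (fun u : ℝ => ((Nat.factorial k : ℂ))⁻¹ • (u • B) ^ k)
      ((k * t ^ (k - 1)) • ((Nat.factorial k : ℂ))⁻¹ • B ^ k) t := by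
    intro k
    have h1 : ∀ u : ℝ, ((Nat.factorial k : ℂ))⁻¹ • (u • B) ^ k
        = u ^ k • ((Nat.factorial k : ℂ))⁻¹ • B ^ k := by
      intro u; rw [smul_pow]; rw [smul_comm]
    simp_rw [h1]
    exact (hasDerivAt_pow k t).smul_const (((Nat.factorial k : ℂ))⁻¹ • B ^ k)
  have hsum : HasDerivAt (myS B (n + 1))
      (∑ k ∈ Finset.range (n + 2), (k * t ^ (k - 1)) • ((Nat.factorial k : ℂ))⁻¹ • B ^ k) t :=
    HasDerivAt.fun_sum (fun k _ => hterm k)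
  convert hsum using 1
  rw [Finset.sum_range_succ']
  simp only [Nat.cast_zero, pow_zero, zero_mul, zero_smul, add_zero]
  rw [myS, Finset.mul_sum]
  refine Finset.sum_congr rfl fun j _ => ?_
  have hfj : (Nat.factorial j : ℂ) ≠ 0 := Nat.cast_ne_zero.mpr j.factorial_ne_zero
  simp only [Nat.add_sub_cancel, smul_pow, mul_smul_comm, ← Complex.coe_smul,
    smul_smul, ← pow_succ']
  congr 1
  have hj1 : ((j:ℂ) + 1) ≠ 0 := Nat.cast_add_one_ne_zero j
  push_cast [Nat.factorial_succ]
  field_simp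

private lemma my_step {N : ℕ} (B : Matrix (Fin N) (Fin N) ℂ)
    {f g : ℝ → Matrix (Fin N) (Fin N) ℂ} {c : ℝ → ℝ}
    (hf0 : f 0 = 0) (hder : ∀ t, HasDerivAt f (B * g t) t)
    (hg : Continuous g) (hc : Continuous c)
    {τ : ℝ} (hτ : 0 ≤ τ) (hbound : ∀ s ∈ Set.Icc 0 τ, ‖g s‖ ≤ c s) :
    ‖f τ‖ ≤ ‖B‖ * ∫ s in (0:ℝ)..τ, c s := by
  have h1 : f τ = ∫ s in (0:ℝ)..τ, B * g s := by
    rw [intervalIntegral.integral_eq_sub_of_hasDerivAt (fun t _ => hder t)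
      ((continuous_const.mul hg).intervalIntegrable 0 τ), hf0, sub_zero]
  rw [h1, show ‖B‖ * ∫ s in (0:ℝ)..τ, c s = ∫ s in (0:ℝ)..τ, ‖B‖ * c s from
    (intervalIntegral.integral_const_mul _ _).symm]
  calc ‖∫ s in (0:ℝ)..τ, B * g s‖ ≤ ∫ s in (0:ℝ)..τ, ‖B * g s‖ :=
        intervalIntegral.norm_integral_le_integral_norm hτ
    _ ≤ ∫ s in (0:ℝ)..τ, ‖B‖ * c s := by
        refine intervalIntegral.integral_mono_on hτ
          ((continuous_const.mul hg).norm.intervalIntegrable 0 τ)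
          ((continuous_const.mul hc).intervalIntegrable 0 τ) fun s hs => ?_
        exact (norm_mul_le _ _).trans
          (mul_le_mul_of_nonneg_left (hbound s hs) (norm_nonneg _))

private lemma exp_unitary_norm {N : ℕ} (A : Matrix (Fin N) (Fin N) ℂ) (hA : A.IsHermitian)
    (hN : Nontrivial (Matrix (Fin N) (Fin N) ℂ)) (t : ℝ) :
    ‖exp (t • (Complex.I • A))‖ = 1 := by
  have hmem : t • (Complex.I • A) ∈ skewAdjoint (Matrix (Fin N) (Fin N) ℂ) := by
    rw [skewAdjoint.mem_iff]
    simp [star_smul, Complex.star_def, Complex.conj_I, Matrix.star_eq_conjTranspose, hA.eq,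
      neg_smul, smul_neg]
  letI : NormedAlgebra ℚ (Matrix (Fin N) (Fin N) ℂ) := NormedAlgebra.restrictScalars ℚ ℂ _
  exact CStarRing.norm_of_mem_unitary (exp_mem_unitary_of_mem_skewAdjoint hmem)

private lemma my_main {N : ℕ} (A : Matrix (Fin N) (Fin N) ℂ) (hA : A.IsHermitian)
    (hN : Nontrivial (Matrix (Fin N) (Fin N) ℂ)) (n : ℕ) :
    ∀ τ : ℝ, 0 ≤ τ →
      ‖exp (τ • (Complex.I • A)) - myS (Complex.I • A) n τ‖
        ≤ (τ * ‖A‖) ^ (n + 1) / ((n + 1).factorial : ℝ) := by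
  set B := Complex.I • A with hBdef
  have hnB : ‖B‖ = ‖A‖ := by simp [hBdef, norm_smul]
  induction n with
  | zero =>
    intro τ hτ
    have hS0 : myS B 0 = fun _ : ℝ => 1 := funext fun t => by simp [myS]
    have hle := my_step B (f := fun t => exp (t • B) - myS B 0 t)
      (g := fun t => exp (t • B)) (c := fun _ => 1)
      (by simp [myS_zero])
      (fun t => by
        have := (hexp B t).fun_sub (hasDerivAt_const t (1 : Matrix (Fin N) (Fin N) ℂ))
        simpa [hS0] using this)
      (exp_cont B) continuous_const hτ
      (fun s _ => le_of_eq (exp_unitary_norm A hA hN s))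
    simpa [hnB, mul_comm] using hle
  | succ n ih =>
    intro τ hτ
    have hle := my_step B (f := fun t => exp (t • B) - myS B (n + 1) t)
      (g := fun t => exp (t • B) - myS B n t)
      (c := fun s => (s * ‖A‖) ^ (n + 1) / ((n + 1).factorial : ℝ))
      (by simp [myS_zero])
      (fun t => by
        have := (hexp B t).fun_sub (myS_deriv B n t)
        simpa [mul_sub] using this)
      ((exp_cont B).sub (myS_cont B n))
      (by fun_prop)
      hτ
      (fun s hs => ih s hs.1)
    refine hle.trans (le_of_eq ?_)
    have : (∫ s in (0:ℝ)..τ, (s * ‖A‖) ^ (n + 1) / ((n + 1).factorial : ℝ))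
        = (τ ^ (n + 2) / (n + 2)) * (‖A‖ ^ (n + 1) / ((n + 1).factorial : ℝ)) := by
      simp_rw [mul_pow, mul_div_assoc]
      rw [intervalIntegral.integral_mul_const, integral_pow]
      push_cast
      ring
    have h1 : ((n:ℝ) + 2) ≠ 0 := by positivity
    have h2 : ((n + 1).factorial : ℝ) ≠ 0 := Nat.cast_ne_zero.mpr (n + 1).factorial_ne_zero
    have h3 : ((n + 1 + 1).factorial : ℝ) = ((n:ℝ) + 2) * ((n + 1).factorial : ℝ) := by
      rw [Nat.factorial_succ]; push_cast; ring
    rw [hnB, this, h3]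
    field_simp
    ring

/-- If `A` is Hermitian, `n` is a natural number and `τ ≥ 0`, then
`‖exp(i τ A) − ∑_{k=0}^{n} (1/k!) (i τ A)^k‖₂ ≤ (τ ‖A‖₂)^{n+1} / (n+1)!`. -/
theorem matrix_exp_I_taylor_remainder {N : ℕ} (A : Matrix (Fin N) (Fin N) ℂ)
    (hA : A.IsHermitian) (n : ℕ) (τ : ℝ) (hτ : 0 ≤ τ) :
    ‖NormedSpace.exp ((Complex.I * (τ : ℂ)) • A)
        - ∑ k ∈ Finset.range (n + 1), ((Nat.factorial k : ℂ))⁻¹ • ((Complex.I * (τ : ℂ)) • A) ^ k‖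
      ≤ (τ * ‖A‖) ^ (n + 1) / (Nat.factorial (n + 1) : ℝ) := by
  rcases Nat.eq_zero_or_pos N with hN | hN
  · subst hN
    have hz : (NormedSpace.exp ((Complex.I * (τ : ℂ)) • A)
        - ∑ k ∈ Finset.range (n + 1), ((Nat.factorial k : ℂ))⁻¹ • ((Complex.I * (τ : ℂ)) • A) ^ k)
        = 0 := Subsingleton.elim _ _
    rw [hz, norm_zero]
    positivity
  · haveI : NeZero N := ⟨hN.ne'⟩
    haveI : Nontrivial (Matrix (Fin N) (Fin N) ℂ) := by unfold Matrix; infer_instance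
    have key : (Complex.I * (τ : ℂ)) • A = τ • (Complex.I • A) := by
      rw [mul_comm, mul_smul, Complex.coe_smul]
    simp only [key]
    exact my_main A hA inferInstance n τ hτ
end

section
/- Let A ∈ ℂ^{N×N} be Hermitian and let τ ≥ 0 satisfy τ · ‖A‖₂ ≤ 1. Set G_τ = Σ_{j=0}^{3} (1/j!) (i τ A)^j. Then for every natural number k: ‖exp(i k τ A) − G_τ^{k}‖₂ ≤ k · (τ ‖A‖₂)^{4} / 24, where exp denotes the matrix exponential and i the imaginary unit. -/
open scoped Matrix Matrix.Norms.L2Operator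



lemma expI_taylor_nonneg : ∀ (n : ℕ) (x : ℝ), 0 ≤ x →
    ‖Complex.exp (x * Complex.I) - ∑ j ∈ Finset.range n,
      ((x : ℂ) * Complex.I) ^ j / (Nat.factorial j : ℂ)‖ ≤ x ^ n / (Nat.factorial n) := by
  intro n
  induction n with
  | zero => intro x hx; simp [Complex.norm_exp]
  | succ n ih =>
    intro x hx
    set f : ℝ → ℂ := fun t => Complex.exp (t * Complex.I) - ∑ j ∈ Finset.range (n+1),
      ((t:ℂ) * Complex.I)^j / (Nat.factorial j : ℂ) with hf
    set f' : ℝ → ℂ := fun t => Complex.I * (Complex.exp (t * Complex.I) - ∑ j ∈ Finset.range n,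
      ((t:ℂ) * Complex.I)^j / (Nat.factorial j : ℂ)) with hf'
    have hderiv : ∀ t : ℝ, HasDerivAt f (f' t) t := by
      intro t
      have h1 : HasDerivAt (fun z : ℂ => Complex.exp (z * Complex.I))
          (Complex.exp ((t:ℂ) * Complex.I) * Complex.I) (t : ℂ) := by
        simpa [Function.comp_def] using (Complex.hasDerivAt_exp ((t:ℂ) * Complex.I)).comp (t:ℂ)
          ((hasDerivAt_id (t:ℂ)).mul_const Complex.I)
      have h2 : HasDerivAt (fun z : ℂ => ∑ j ∈ Finset.range (n+1),
          (z * Complex.I)^j / (Nat.factorial j : ℂ))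
          (∑ j ∈ Finset.range (n+1),
            ((j : ℂ) * ((t:ℂ) * Complex.I)^(j-1) * Complex.I) / (Nat.factorial j : ℂ)) (t : ℂ) := by
        apply HasDerivAt.fun_sum
        intro j _
        simpa using (((hasDerivAt_id (t:ℂ)).mul_const Complex.I).pow j).div_const ((Nat.factorial j : ℂ))
      have h3 := (h1.sub h2).comp_ofReal
      have key : Complex.exp ((t:ℂ) * Complex.I) * Complex.I
          - ∑ j ∈ Finset.range (n+1),
            ((j : ℂ) * ((t:ℂ) * Complex.I)^(j-1) * Complex.I) / (Nat.factorial j : ℂ) = f' t := by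
        rw [hf']
        rw [Finset.sum_range_succ']
        simp only [Nat.cast_zero, zero_mul, pow_zero, Nat.factorial_zero, Nat.cast_one, div_one,
          add_zero]
        rw [mul_sub, Finset.mul_sum]
        congr 1
        · ring
        · apply Finset.sum_congr rfl
          intro i _
          rw [Nat.factorial_succ]
          push_cast
          have hi : (i : ℂ) + 1 ≠ 0 := Nat.cast_add_one_ne_zero i
          have hfac : (Nat.factorial i : ℂ) ≠ 0 := Nat.cast_ne_zero.mpr (Nat.factorial_ne_zero i)
          field_simp
      rw [← key]
      exact h3
    have hcont : Continuous f' := by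
      apply Continuous.mul continuous_const
      apply Continuous.sub
      · exact Complex.continuous_exp.comp (by continuity)
      · continuity
    have hf0 : f 0 = 0 := by
      simp only [hf, Complex.ofReal_zero, zero_mul, Complex.exp_zero]
      rw [Finset.sum_eq_single 0]
      · simp
      · intro b _ hb
        simp [zero_pow hb]
      · simp
    have hint : ∫ t in (0:ℝ)..x, f' t = f x - f 0 :=
      intervalIntegral.integral_eq_sub_of_hasDerivAt (fun t _ => hderiv t)
        (hcont.intervalIntegrable _ _)
    have hbound : ‖f x‖ ≤ ∫ t in (0:ℝ)..x, t ^ n / (Nat.factorial n) := by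
      calc ‖f x‖ = ‖∫ t in (0:ℝ)..x, f' t‖ := by rw [hint, hf0, sub_zero]
        _ ≤ ∫ t in (0:ℝ)..x, ‖f' t‖ := intervalIntegral.norm_integral_le_integral_norm hx
        _ ≤ _ := by
            apply intervalIntegral.integral_mono_on hx
            · exact (hcont.norm.intervalIntegrable _ _)
            · exact ((continuous_pow n).div_const _).intervalIntegrable _ _
            · intro t ht
              have : ‖f' t‖ = ‖Complex.exp (t * Complex.I) - ∑ j ∈ Finset.range n,
                  ((t:ℂ) * Complex.I)^j / (Nat.factorial j : ℂ)‖ := by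
                rw [hf', norm_mul, Complex.norm_I, one_mul]
              rw [this]
              exact ih t ht.1
    calc ‖f x‖ ≤ ∫ t in (0:ℝ)..x, t ^ n / (Nat.factorial n) := hbound
      _ = x ^ (n+1) / (n+1) / (Nat.factorial n) := by
          rw [intervalIntegral.integral_div, integral_pow]
          simp
      _ = x ^ (n+1) / (Nat.factorial (n+1)) := by
          rw [Nat.factorial_succ]
          push_cast
          field_simp

lemma expI_taylor (n : ℕ) (x : ℝ) :
    ‖Complex.exp (x * Complex.I) - ∑ j ∈ Finset.range n,
      ((x : ℂ) * Complex.I) ^ j / (Nat.factorial j : ℂ)‖ ≤ |x| ^ n / (Nat.factorial n) := by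
  rcases le_or_gt 0 x with hx | hx
  · rw [_root_.abs_of_nonneg hx]; exact expI_taylor_nonneg n x hx
  · have hconj : (starRingEnd ℂ) (Complex.exp ((-x : ℝ) * Complex.I) - ∑ j ∈ Finset.range n,
        (((-x : ℝ) : ℂ) * Complex.I) ^ j / (Nat.factorial j : ℂ))
        = Complex.exp ((x:ℝ) * Complex.I) - ∑ j ∈ Finset.range n,
          ((x : ℂ) * Complex.I) ^ j / (Nat.factorial j : ℂ) := by
      rw [map_sub, map_sum, ← Complex.exp_conj]
      congr 1
      · congr 1
        simp [Complex.conj_I]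
      · apply Finset.sum_congr rfl
        intro j _
        rw [map_div₀, map_pow, map_mul, Complex.conj_I, Complex.conj_ofReal]
        push_cast
        norm_num
    rw [← hconj, RCLike.norm_conj]
    have := expI_taylor_nonneg n (-x) (by linarith)
    simpa [abs_of_neg hx] using this

lemma g_norm_le (x : ℝ) (hx : |x| ≤ 1) :
    ‖∑ j ∈ Finset.range 4, ((Nat.factorial j : ℂ))⁻¹ * ((x:ℂ) * Complex.I)^j‖ ≤ 1 := by
  have hI3 : Complex.I ^ 3 = -Complex.I := by
    rw [pow_succ, Complex.I_sq]; ring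
  have hg : ∑ j ∈ Finset.range 4, ((Nat.factorial j : ℂ))⁻¹ * ((x:ℂ) * Complex.I)^j
      = ((1 - x^2/2 : ℝ) : ℂ) + ((x - x^3/6 : ℝ) : ℂ) * Complex.I := by
    simp only [Finset.sum_range_succ, Finset.sum_range_zero]
    norm_num [Nat.factorial]
    ring_nf
    rw [hI3, Complex.I_sq]
    ring
  rw [hg, Complex.norm_def, Complex.normSq_add_mul_I]
  apply Real.sqrt_le_one.mpr
  have h2 : x^2 ≤ 1 := by
    have := abs_le.mp hx
    nlinarith
  nlinarith [sq_nonneg x, sq_nonneg (x^2), mul_le_mul_of_nonneg_left h2 (pow_nonneg (sq_nonneg x) 2)]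

lemma expI_unit (x : ℝ) : ‖Complex.exp ((x:ℂ) * Complex.I)‖ = 1 := by
  rw [Complex.norm_exp]
  simp

lemma scalar_key (x : ℝ) (hx : |x| ≤ 1) (k : ℕ) :
    ‖Complex.exp (((k : ℝ) * x : ℝ) * Complex.I)
      - (∑ j ∈ Finset.range 4, ((Nat.factorial j : ℂ))⁻¹ * ((x:ℂ) * Complex.I)^j)^k‖
      ≤ (k : ℝ) * x^4 / 24 := by
  set g : ℂ := ∑ j ∈ Finset.range 4, ((Nat.factorial j : ℂ))⁻¹ * ((x:ℂ) * Complex.I)^j with hgdef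
  have hgle : ‖g‖ ≤ 1 := g_norm_le x hx
  have hstep : ‖Complex.exp ((x:ℂ) * Complex.I) - g‖ ≤ x^4/24 := by
    have h4 := expI_taylor 4 x
    have habs : |x|^4 = x^4 := by
      rw [pow_abs, _root_.abs_of_nonneg (by positivity : (0:ℝ) ≤ x^4)]
    have heq : g = ∑ j ∈ Finset.range 4, ((x:ℂ) * Complex.I)^j / (Nat.factorial j : ℂ) := by
      rw [hgdef]; apply Finset.sum_congr rfl; intro j _; rw [div_eq_inv_mul]
    rw [heq]
    refine h4.trans (le_of_eq ?_)
    rw [habs]; norm_num [Nat.factorial]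
  induction k with
  | zero => simp
  | succ k ih =>
    have hexp : Complex.exp ((((k+1 : ℕ) : ℝ) * x : ℝ) * Complex.I)
        = Complex.exp ((x:ℂ) * Complex.I) * Complex.exp (((k : ℝ) * x : ℝ) * Complex.I) := by
      rw [← Complex.exp_add]; congr 1; push_cast; ring
    have key : Complex.exp ((((k+1 : ℕ) : ℝ) * x : ℝ) * Complex.I) - g^(k+1)
        = Complex.exp ((x:ℂ) * Complex.I) * (Complex.exp (((k : ℝ) * x : ℝ) * Complex.I) - g^k)
          + (Complex.exp ((x:ℂ) * Complex.I) - g) * g^k := by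
      rw [hexp]; ring
    have hgk : ‖g^k‖ ≤ 1 := by
      rw [norm_pow]; exact pow_le_one₀ (norm_nonneg _) hgle
    rw [key]
    refine (norm_add_le _ _).trans ?_
    rw [norm_mul, norm_mul, expI_unit, one_mul]
    have h2 : ‖Complex.exp ((x:ℂ) * Complex.I) - g‖ * ‖g^k‖ ≤ x^4/24 := by
      calc ‖Complex.exp ((x:ℂ) * Complex.I) - g‖ * ‖g^k‖
          ≤ (x^4/24) * 1 := mul_le_mul hstep hgk (norm_nonneg _) (by positivity)
        _ = x^4/24 := by ring
    push_cast [Complex.ofReal_mul] at ih ⊢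
    linarith

set_option maxHeartbeats 1000000 in

lemma diag_norm_le {N : ℕ} (v : Fin N → ℂ) (C : ℝ) (hC : 0 ≤ C) (h : ∀ i, ‖v i‖ ≤ C) :
    ‖Matrix.diagonal v‖ ≤ C := by
  rw [Matrix.l2_opNorm_def]
  apply ContinuousLinearMap.opNorm_le_bound _ hC
  intro x
  have hrfl : ((Matrix.toEuclideanLin ≪≫ₗ LinearMap.toContinuousLinearMap) (Matrix.diagonal v)) x
      = Matrix.toEuclideanLin (Matrix.diagonal v) x := rfl
  rw [hrfl, Matrix.toEuclideanLin_apply]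
  rw [EuclideanSpace.norm_eq, EuclideanSpace.norm_eq]
  rw [show C * Real.sqrt (∑ i, ‖x i‖^2) = Real.sqrt (C^2 * ∑ i, ‖x i‖^2) by
    rw [Real.sqrt_mul (by positivity), Real.sqrt_sq hC]]
  apply Real.sqrt_le_sqrt
  rw [Finset.mul_sum]
  apply Finset.sum_le_sum
  intro i _
  have : ((WithLp.equiv 2 (Fin N → ℂ)).symm ((Matrix.diagonal v).mulVec
      ((WithLp.equiv 2 (Fin N → ℂ)) x))) i = v i * x i := by
    simp [Matrix.mulVec_diagonal]
  rw [show (WithLp.toLp 2 (Matrix.diagonal v *ᵥ x.ofLp)).ofLp i = v i * x i from this, norm_mul, mul_pow]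
  have h1 : ‖v i‖^2 ≤ C^2 := by
    have := h i
    nlinarith [norm_nonneg (v i)]
  nlinarith [sq_nonneg (‖x i‖), norm_nonneg (x i)]


lemma eig_bound {N : ℕ} (A : Matrix (Fin N) (Fin N) ℂ) (hA : A.IsHermitian) (i : Fin N) :
    |hA.eigenvalues i| ≤ ‖A‖ := by
  have h := Matrix.l2_opNorm_mulVec A (hA.eigenvectorBasis i)
  have hb : ‖hA.eigenvectorBasis i‖ = 1 := hA.eigenvectorBasis.orthonormal.1 i
  have hmv : (EuclideanSpace.equiv (Fin N) ℂ).symm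
      (A.mulVec ((WithLp.equiv 2 (Fin N → ℂ)) (hA.eigenvectorBasis i)))
      = hA.eigenvalues i • hA.eigenvectorBasis i := by
    rw [show (WithLp.equiv 2 (Fin N → ℂ)) (hA.eigenvectorBasis i) = (hA.eigenvectorBasis i).ofLp from rfl, hA.mulVec_eigenvectorBasis]
    rfl
  rw [show (A.mulVec (hA.eigenvectorBasis i)) =
      (A.mulVec ((WithLp.equiv 2 (Fin N → ℂ)) (hA.eigenvectorBasis i))) from rfl] at h
  rw [hmv, norm_smul, hb, Real.norm_eq_abs, mul_one, mul_one] at h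
  exact h

section helpers

lemma smul_conj_mat {N : ℕ} (V M W : Matrix (Fin N) (Fin N) ℂ) (c : ℂ) :
    c • (V * M * W) = V * (c • M) * W := by
  rw [Matrix.mul_smul, Matrix.smul_mul]

end helpers

/-- If `A` is Hermitian, `0 ≤ τ` with `τ · ‖A‖₂ ≤ 1`, and
`G_τ = ∑_{j=0}^{3} (1/j!) (i τ A)^j`, then for every natural number `k`,
`‖exp(i k τ A) − G_τ^k‖₂ ≤ k (τ ‖A‖₂)^4 / 24`. -/
theorem matrix_exp_I_pow_taylor_remainder {N : ℕ} (A : Matrix (Fin N) (Fin N) ℂ)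
    (hA : A.IsHermitian) (τ : ℝ) (hτ : 0 ≤ τ) (hτA : τ * ‖A‖ ≤ 1) :
    ∀ k : ℕ,
      ‖NormedSpace.exp ((Complex.I * (k : ℂ) * (τ : ℂ)) • A)
          - (∑ j ∈ Finset.range 4, ((Nat.factorial j : ℂ))⁻¹ • ((Complex.I * (τ : ℂ)) • A) ^ j) ^ k‖
        ≤ (k : ℝ) * (τ * ‖A‖) ^ 4 / 24 := by
  intro k
  classical
  set E : Fin N → ℝ := hA.eigenvalues with hE
  set V : Matrix (Fin N) (Fin N) ℂ := (hA.eigenvectorUnitary : Matrix (Fin N) (Fin N) ℂ) with hVdef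
  have hmem : V ∈ unitary (Matrix (Fin N) (Fin N) ℂ) := hA.eigenvectorUnitary.2
  have hV : star V * V = 1 := Unitary.star_mul_self_of_mem hmem
  have hV' : V * star V = 1 := Unitary.mul_star_self_of_mem hmem
  have hVinv : V⁻¹ = star V := Matrix.inv_eq_left_inv hV
  have hUnit : IsUnit V := ⟨⟨V, star V, hV', hV⟩, rfl⟩
  have hconjpow : ∀ (M : Matrix (Fin N) (Fin N) ℂ) (j : ℕ),
      (V * M * star V) ^ j = V * M ^ j * star V := by
    intro M j
    simpa using Units.conj_pow ⟨V, star V, hV', hV⟩ M j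
  have hspec : A = V * Matrix.diagonal (fun i => (E i : ℂ)) * star V := hA.spectral_theorem
  have hconj : ∀ (c : ℂ), c • A = V * Matrix.diagonal (fun i => c * (E i : ℂ)) * star V := by
    intro c
    rw [hspec, smul_conj_mat]
    congr 1
    congr 1
    rw [← Matrix.diagonal_smul]
    congr 1
  -- exponential side
  have hexp : NormedSpace.exp ((Complex.I * (k : ℂ) * (τ : ℂ)) • A)
      = V * Matrix.diagonal
          (fun i => Complex.exp (Complex.I * (k : ℂ) * (τ : ℂ) * (E i : ℂ))) * star V := by
    rw [hconj, ← hVinv, Matrix.exp_conj V _ hUnit, hVinv, Matrix.exp_diagonal, Pi.exp_def]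
    congr 1
    congr 1
    funext i
    rw [← Complex.exp_eq_exp_ℂ]
  -- polynomial side
  have hpow : ∀ j : ℕ, ((Complex.I * (τ : ℂ)) • A) ^ j
      = V * Matrix.diagonal (fun i => (Complex.I * (τ : ℂ) * (E i : ℂ)) ^ j) * star V := by
    intro j
    rw [hconj, hconjpow, Matrix.diagonal_pow]
    rfl
  have hG : (∑ j ∈ Finset.range 4, ((Nat.factorial j : ℂ))⁻¹ • ((Complex.I * (τ : ℂ)) • A) ^ j)
      = V * Matrix.diagonal (fun i => ∑ j ∈ Finset.range 4,
          ((Nat.factorial j : ℂ))⁻¹ * (Complex.I * (τ : ℂ) * (E i : ℂ)) ^ j) * star V := by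
    calc ∑ j ∈ Finset.range 4, ((Nat.factorial j : ℂ))⁻¹ • ((Complex.I * (τ : ℂ)) • A) ^ j
        = ∑ j ∈ Finset.range 4, V * Matrix.diagonal
            (fun i => ((Nat.factorial j : ℂ))⁻¹ * (Complex.I * (τ : ℂ) * (E i : ℂ)) ^ j) * star V := by
          refine Finset.sum_congr rfl fun j _ => ?_
          rw [hpow j, smul_conj_mat]
          congr 1
          congr 1
          rw [← Matrix.diagonal_smul]
          congr 1
      _ = V * (∑ j ∈ Finset.range 4, Matrix.diagonal
            (fun i => ((Nat.factorial j : ℂ))⁻¹ * (Complex.I * (τ : ℂ) * (E i : ℂ)) ^ j)) * star V := by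
          rw [← Finset.sum_mul, ← Finset.mul_sum]
      _ = _ := by
          congr 1
          congr 1
          ext i i'
          rcases eq_or_ne i i' with rfl | h
          · simp [Matrix.sum_apply, Matrix.diagonal_apply_eq]
          · simp [Matrix.sum_apply, Matrix.diagonal_apply_ne _ h]
  have hGk : (∑ j ∈ Finset.range 4, ((Nat.factorial j : ℂ))⁻¹ • ((Complex.I * (τ : ℂ)) • A) ^ j) ^ k
      = V * Matrix.diagonal (fun i => (∑ j ∈ Finset.range 4,
          ((Nat.factorial j : ℂ))⁻¹ * (Complex.I * (τ : ℂ) * (E i : ℂ)) ^ j) ^ k) * star V := by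
    rw [hG, hconjpow, Matrix.diagonal_pow]
    rfl
  have hdiff : NormedSpace.exp ((Complex.I * (k : ℂ) * (τ : ℂ)) • A)
      - (∑ j ∈ Finset.range 4, ((Nat.factorial j : ℂ))⁻¹ • ((Complex.I * (τ : ℂ)) • A) ^ j) ^ k
      = V * Matrix.diagonal (fun i =>
          Complex.exp (Complex.I * (k : ℂ) * (τ : ℂ) * (E i : ℂ))
          - (∑ j ∈ Finset.range 4,
              ((Nat.factorial j : ℂ))⁻¹ * (Complex.I * (τ : ℂ) * (E i : ℂ)) ^ j) ^ k) * star V := by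
    rw [hexp, hGk, ← Matrix.sub_mul, ← Matrix.mul_sub, Matrix.diagonal_sub]
  rw [hdiff]
  -- norms
  have hUu : (⟨V, hmem⟩ : unitary (Matrix (Fin N) (Fin N) ℂ)) = ⟨V, hmem⟩ := rfl
  have hnorm : ∀ D : Matrix (Fin N) (Fin N) ℂ, ‖V * D * star V‖ = ‖D‖ := by
    intro D
    have h1 : ‖V * D * star V‖ = ‖V * D‖ := by
      have := CStarRing.norm_mul_coe_unitary (V * D) (star (⟨V, hmem⟩ : unitary (Matrix (Fin N) (Fin N) ℂ)))
      simpa using this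
    rw [h1]
    exact CStarRing.norm_coe_unitary_mul (⟨V, hmem⟩ : unitary (Matrix (Fin N) (Fin N) ℂ)) D
  rw [hnorm]
  apply diag_norm_le
  · positivity
  · intro i
    have heig : |E i| ≤ ‖A‖ := eig_bound A hA i
    have hx : |τ * E i| ≤ 1 := by
      rw [abs_mul, _root_.abs_of_nonneg hτ]
      calc τ * |E i| ≤ τ * ‖A‖ := mul_le_mul_of_nonneg_left heig hτ
        _ ≤ 1 := hτA
    have hk := scalar_key (τ * E i) hx k
    rw [show (((k : ℝ) * (τ * E i) : ℝ) : ℂ) * Complex.I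
        = Complex.I * (k : ℂ) * (τ : ℂ) * (E i : ℂ) by push_cast; ring] at hk
    have harg : ((τ * E i : ℝ) : ℂ) * Complex.I = Complex.I * (τ : ℂ) * (E i : ℂ) := by
      push_cast; ring
    rw [harg] at hk
    refine hk.trans ?_
    have h4 : (τ * E i) ^ 4 ≤ (τ * ‖A‖) ^ 4 := by
      calc (τ * E i) ^ 4 = |τ * E i| ^ 4 := by
            rw [pow_abs, _root_.abs_of_nonneg (by positivity : (0:ℝ) ≤ (τ * E i)^4)]
        _ ≤ (τ * ‖A‖) ^ 4 := by
            apply pow_le_pow_left₀ (abs_nonneg _)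
            rw [abs_mul, _root_.abs_of_nonneg hτ]
            exact mul_le_mul_of_nonneg_left heig hτ
    have hk0 : (0:ℝ) ≤ (k : ℝ) := Nat.cast_nonneg k
    apply div_le_div_of_nonneg_right ?_ (by norm_num)
    · exact mul_le_mul_of_nonneg_left h4 hk0
end
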